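/- arXiv:2303.02369 — 3 statements merged into one kernel-verified Lean document; each statement's English description precedes it below -/
import Mathlib

section
/- The metric space (C_p(n) ∪ {0}, δ^V) is the completion of (C_p(n), δ^V), where 0 is an added point with δ^V(P, 0) = Vol(P) for every proper convex body P. Concretely: every Cauchy sequence (P_m) in (C_p(n), δ^V) either satisfies Vol(P_m) → 0, or there exists a proper convex body Q ∈ C_p(n) with δ^V(P_m, Q) → 0. -/
/- Common definitions: polytopes, faces, Delzant polytopes, normal fans,
   the symmetric-difference and Hausdorff metrics, and the AGL(n,ℤ) action. -/

open Set MeasureTheory Metric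
open scoped Pointwise

noncomputable section

/-- Euclidean `n`-space `ℝⁿ`. -/
abbrev Euc (n : ℕ) := EuclideanSpace ℝ (Fin n)

/-- The standard pairing (inner product), used to identify `ℝⁿ` with its dual. -/
def dotE {n : ℕ} (α x : Euc n) : ℝ := ∑ i, α i * x i

/-- The face of `P` in the direction `α`: the set of points of `P` maximizing `⟨α, ·⟩`. -/
def faceInDir {n : ℕ} (P : Set (Euc n)) (α : Euc n) : Set (Euc n) :=
  {p ∈ P | ∀ q ∈ P, dotE α q ≤ dotE α p}

/-- `F` is a face of `P` (for `α = 0` this gives `P` itself). -/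
def IsFaceOf {n : ℕ} (P F : Set (Euc n)) : Prop := ∃ α, F = faceInDir P α

/-- The (affine) dimension of a subset of `ℝⁿ`. -/
def setDim {n : ℕ} (F : Set (Euc n)) : ℕ := Module.finrank ℝ (affineSpan ℝ F).direction

/-- A convex polytope: the convex hull of a finite set of points. -/
def IsPolytope {n : ℕ} (P : Set (Euc n)) : Prop := ∃ S : Finset (Euc n), P = convexHull ℝ ↑S

/-- The real vector associated to an integer vector. -/
def intVec {n : ℕ} (v : Fin n → ℤ) : Euc n := WithLp.toLp 2 (fun i => (v i : ℝ))

/-- An integer vector is primitive if its entries are relatively prime. -/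
def IsPrimitive {n : ℕ} (v : Fin n → ℤ) : Prop := Finset.univ.gcd v = 1

/-- A vector of `ℝⁿ` is rational if all its coordinates are rational. -/
def IsRatVec {n : ℕ} (v : Euc n) : Prop := ∀ i, ∃ q : ℚ, v i = (q : ℝ)

/-- `v` is a vertex of `P`: the singleton `{v}` is a (0-dimensional) face. -/
def IsVertexOf {n : ℕ} (P : Set (Euc n)) (v : Euc n) : Prop := IsFaceOf P {v}

/-- An edge of `P` is a 1-dimensional face. -/
def IsEdgeOf {n : ℕ} (P : Set (Euc n)) (e : Set (Euc n)) : Prop := IsFaceOf P e ∧ setDim e = 1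

/-- A facet of `P ⊆ ℝⁿ` is an `(n-1)`-dimensional face. -/
def IsFacetOf {n : ℕ} (P : Set (Euc n)) (f : Set (Euc n)) : Prop := IsFaceOf P f ∧ setDim f = n - 1

/-- The vector `u` points along the edge `e` emanating from the vertex `v`. -/
def DirAlong {n : ℕ} (v : Euc n) (e : Set (Euc n)) (u : Euc n) : Prop :=
  ∃ p ∈ e, ∃ t : ℝ, 0 < t ∧ p = v + t • u

/-- A Delzant polytope in `ℝⁿ`: a full-dimensional polytope such that at every vertex there
are exactly `n` edges, and integer vectors pointing along these edges can be chosen forming a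
basis of `ℤⁿ` (i.e. with determinant `±1`; such vectors are automatically the primitive
edge-direction vectors).  This encodes simplicity, rationality of edge directions and the
smoothness condition simultaneously. -/
def IsDelzant {n : ℕ} (P : Set (Euc n)) : Prop :=
  IsPolytope P ∧ affineSpan ℝ P = ⊤ ∧
  ∀ v : Euc n, IsVertexOf P v →
    ∃ (u : Fin n → (Fin n → ℤ)) (e : Fin n → Set (Euc n)),
      Function.Injective e ∧
      (∀ i, IsEdgeOf P (e i) ∧ v ∈ e i ∧ DirAlong v (e i) (intVec (u i))) ∧
      (∀ e', IsEdgeOf P e' → v ∈ e' → ∃ i, e' = e i) ∧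
      ((Matrix.of u).det = 1 ∨ (Matrix.of u).det = -1)

/-- The normal cone of a face `F` of `P`. -/
def normalCone {n : ℕ} (P F : Set (Euc n)) : Set (Euc n) :=
  {α | ∀ p ∈ F, ∀ q ∈ P, dotE α q ≤ dotE α p}

/-- The normal fan of `P`, as the collection of normal cones of its (nonempty) faces. -/
def normalFan {n : ℕ} (P : Set (Euc n)) : Set (Set (Euc n)) :=
  {C | ∃ F, IsFaceOf P F ∧ F.Nonempty ∧ C = normalCone P F}

/-- A collection of cones `A` refines `B` if every member of `A` is contained in a member
of `B`. -/
def RefinesFan {n : ℕ} (A B : Set (Set (Euc n))) : Prop :=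
  ∀ C ∈ A, ∃ C' ∈ B, C ⊆ C'

/-- The symmetric-difference (volume) distance `δ^V`. -/
def deltaV {n : ℕ} (P Q : Set (Euc n)) : ℝ :=
  (volume (P \ Q)).toReal + (volume (Q \ P)).toReal

/-- A proper convex body: a compact convex set with nonempty interior. -/
def IsProperBody {n : ℕ} (P : Set (Euc n)) : Prop :=
  P.Nonempty ∧ IsCompact P ∧ Convex ℝ P ∧ (interior P).Nonempty

/-- The affine map `x ↦ Ax + c` on `ℝⁿ` determined by an integer matrix `A` and `c ∈ ℝⁿ`. -/
def aglMap {n : ℕ} (A : Matrix (Fin n) (Fin n) ℤ) (c : Euc n) : Euc n → Euc n :=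
  fun x => WithLp.toLp 2 (fun i => (∑ j, (A i j : ℝ) * x j) + c i)

/-- `A ∈ GL(n,ℤ)`, i.e. `A` is an integer matrix with determinant `±1`. -/
def IsAGLZ {n : ℕ} (A : Matrix (Fin n) (Fin n) ℤ) : Prop := A.det = 1 ∨ A.det = -1

/-- `Q` lies in the `AGL(n,ℤ)`-orbit of `P`. -/
def inOrbit {n : ℕ} (P Q : Set (Euc n)) : Prop :=
  ∃ A c, IsAGLZ A ∧ Q = aglMap A c '' P

/-- The induced distance `δ̃^V` between `AGL(n,ℤ)`-orbits (evaluated on representatives). -/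
def deltaVOrbit {n : ℕ} (P Q : Set (Euc n)) : ℝ :=
  sInf {d | ∃ P' Q', inOrbit P P' ∧ inOrbit Q Q' ∧ d = deltaV P' Q'}

open scoped ENNReal

namespace DelzAux

variable {n : ℕ}

lemma deltaV_comm (P Q : Set (Euc n)) : deltaV P Q = deltaV Q P := by
  simp [deltaV, add_comm]

lemma deltaV_nonneg (P Q : Set (Euc n)) : 0 ≤ deltaV P Q :=
  add_nonneg ENNReal.toReal_nonneg ENNReal.toReal_nonneg

/-- triangle-type inclusion -/
lemma diff_triangle {X : Type*} (A B C : Set X) : A \ C ⊆ (A \ B) ∪ (B \ C) := by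
  intro x hx
  by_cases hB : x ∈ B
  · exact Or.inr ⟨hB, hx.2⟩
  · exact Or.inl ⟨hx.1, hB⟩

lemma meas_diff_triangle (A B C : Set (Euc n)) :
    volume (A \ C) ≤ volume (A \ B) + volume (B \ C) :=
  le_trans (measure_mono (diff_triangle A B C)) (measure_union_le _ _)

/-- from smallness of deltaV, ennreal bounds on each diff -/
lemma diff_le_ofReal {P Q : Set (Euc n)} (hP : volume P ≠ ⊤) {ε : ℝ}
    (h : deltaV P Q < ε) : volume (P \ Q) ≤ ENNReal.ofReal ε := by
  have hfin : volume (P \ Q) ≠ ⊤ :=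
    (lt_of_le_of_lt (measure_mono diff_subset) hP.lt_top).ne
  rw [ENNReal.le_ofReal_iff_toReal_le hfin
    (le_trans (deltaV_nonneg P Q) h.le)]
  calc (volume (P \ Q)).toReal ≤ deltaV P Q := le_add_of_nonneg_right ENNReal.toReal_nonneg
    _ ≤ ε := h.le

lemma diff_le_ofReal' {P Q : Set (Euc n)} (hQ : volume Q ≠ ⊤) {ε : ℝ}
    (h : deltaV P Q < ε) : volume (Q \ P) ≤ ENNReal.ofReal ε := by
  rw [deltaV_comm] at h
  exact diff_le_ofReal hQ h

lemma deltaV_le_toReal {P Q : Set (Euc n)} {a b : ℝ≥0∞} (ha : a ≠ ⊤) (hb : b ≠ ⊤)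
    (h1 : volume (P \ Q) ≤ a) (h2 : volume (Q \ P) ≤ b) :
    deltaV P Q ≤ a.toReal + b.toReal :=
  add_le_add (ENNReal.toReal_mono ha h1) (ENNReal.toReal_mono hb h2)

/-- volumes differ by at most deltaV -/
lemma abs_vol_sub_le {P Q : Set (Euc n)} (hP : volume P ≠ ⊤) (hQ : volume Q ≠ ⊤) :
    |(volume P).toReal - (volume Q).toReal| ≤ deltaV P Q := by
  have key : ∀ A B : Set (Euc n), volume A ≠ ⊤ → volume B ≠ ⊤ →
      (volume A).toReal - (volume B).toReal ≤ deltaV A B := by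
    intro A B hA hB
    have h1 : volume A ≤ volume B + volume (A \ B) := by
      calc volume A = volume ((A ∩ B) ∪ (A \ B)) := by rw [Set.inter_union_diff]
        _ ≤ volume (A ∩ B) + volume (A \ B) := measure_union_le _ _
        _ ≤ volume B + volume (A \ B) := by
            have : volume (A ∩ B) ≤ volume B := measure_mono Set.inter_subset_right
            exact add_le_add this le_rfl
    have hfin : volume B + volume (A \ B) ≠ ⊤ := by
      refine ENNReal.add_ne_top.2 ⟨hB, ?_⟩
      exact (lt_of_le_of_lt (measure_mono diff_subset) hA.lt_top).ne
    have := ENNReal.toReal_mono hfin h1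
    rw [ENNReal.toReal_add hB ((lt_of_le_of_lt (measure_mono diff_subset) hA.lt_top).ne)] at this
    have h2 : (volume (A \ B)).toReal ≤ deltaV A B :=
      le_add_of_nonneg_right ENNReal.toReal_nonneg
    linarith
  rw [abs_sub_le_iff]
  exact ⟨key P Q hP hQ, by rw [deltaV_comm]; exact key Q P hQ hP⟩

/-- The liminf set. -/
def limSet (S : ℕ → Set (Euc n)) : Set (Euc n) := {x | ∃ N, ∀ j ≥ N, x ∈ S j}

lemma limSet_convex (S : ℕ → Set (Euc n)) (hS : ∀ j, Convex ℝ (S j)) :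
    Convex ℝ (limSet S) := by
  intro x hx y hy a b ha hb hab
  obtain ⟨N₁, h₁⟩ := hx
  obtain ⟨N₂, h₂⟩ := hy
  exact ⟨max N₁ N₂, fun j hj =>
    hS j (h₁ j (le_trans (le_max_left _ _) hj)) (h₂ j (le_trans (le_max_right _ _) hj)) ha hb hab⟩

lemma symmDiff_limSet_subset (S : ℕ → Set (Euc n)) (k : ℕ) :
    (S k \ limSet S) ∪ (limSet S \ S k) ⊆
      ⋃ i : ℕ, ((S (k + i) \ S (k + i + 1)) ∪ (S (k + i + 1) \ S (k + i))) := by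
  classical
  intro x hx
  rcases hx with ⟨hxk, hxL⟩ | ⟨hxL, hxk⟩
  · have h : ∃ i, x ∉ S (k + i) := by
      by_contra h; push_neg at h
      exact hxL ⟨k, fun j hj => by
        have := h (j - k); rwa [Nat.add_sub_cancel' hj] at this⟩
    have hpos : Nat.find h ≠ 0 := by
      intro h0
      have := Nat.find_spec h
      rw [h0] at this
      exact this hxk
    obtain ⟨i, hi⟩ : ∃ i, Nat.find h = i + 1 := ⟨Nat.find h - 1, (Nat.succ_pred_eq_of_pos (Nat.pos_of_ne_zero hpos)).symm⟩
    have hin : x ∈ S (k + i) := by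
      by_contra hc
      exact Nat.find_min h (by omega) hc
    have hout : x ∉ S (k + i + 1) := by
      have := Nat.find_spec h
      rw [hi] at this
      rwa [show k + i + 1 = k + (i + 1) by ring]
    exact mem_iUnion.2 ⟨i, Or.inl ⟨hin, hout⟩⟩
  · obtain ⟨N, hN⟩ := hxL
    have h : ∃ i, x ∈ S (k + i) := ⟨N, hN _ (Nat.le_add_left N k)⟩
    have hpos : Nat.find h ≠ 0 := by
      intro h0
      have := Nat.find_spec h
      rw [h0] at this
      exact hxk this
    obtain ⟨i, hi⟩ : ∃ i, Nat.find h = i + 1 := ⟨Nat.find h - 1, (Nat.succ_pred_eq_of_pos (Nat.pos_of_ne_zero hpos)).symm⟩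
    have hout : x ∉ S (k + i) := by
      intro hc
      exact Nat.find_min h (by omega) hc
    have hin : x ∈ S (k + i + 1) := by
      have := Nat.find_spec h
      rw [hi] at this
      rwa [show k + i + 1 = k + (i + 1) by ring]
    exact mem_iUnion.2 ⟨i, Or.inr ⟨hin, hout⟩⟩

end DelzAux

namespace DelzAux

variable {n : ℕ}

lemma tsum_half_bound (k : ℕ) :
    (∑' i : ℕ, ENNReal.ofReal ((1/2 : ℝ) ^ (k + i))) ≤ ENNReal.ofReal (2 * (1/2) ^ k) := by
  have hnn : ∀ i : ℕ, (0:ℝ) ≤ (1/2 : ℝ) ^ (k + i) := fun i => by positivity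
  have hsum : Summable (fun i : ℕ => (1/2 : ℝ) ^ (k + i)) := by
    simpa [pow_add] using (summable_geometric_of_lt_one (by norm_num) (by norm_num : (1/2:ℝ) < 1)).mul_left ((1/2:ℝ)^k)
  rw [← ENNReal.ofReal_tsum_of_nonneg hnn hsum]
  apply ENNReal.ofReal_le_ofReal
  have : (∑' i : ℕ, (1/2 : ℝ) ^ (k + i)) = (1/2)^k * ∑' i : ℕ, (1/2:ℝ)^i := by
    simp [pow_add, tsum_mul_left]
  rw [this, tsum_geometric_of_lt_one (by norm_num) (by norm_num : (1/2:ℝ) < 1)]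
  norm_num [mul_comm]

lemma measure_symmDiff_limSet_le (S : ℕ → Set (Euc n))
    (hA : ∀ j, volume ((S j \ S (j+1)) ∪ (S (j+1) \ S j)) ≤ ENNReal.ofReal ((1/2:ℝ)^j)) (k : ℕ) :
    volume ((S k \ limSet S) ∪ (limSet S \ S k)) ≤ ENNReal.ofReal (2 * (1/2:ℝ)^k) := by
  calc volume ((S k \ limSet S) ∪ (limSet S \ S k))
      ≤ volume (⋃ i : ℕ, ((S (k + i) \ S (k + i + 1)) ∪ (S (k + i + 1) \ S (k + i)))) :=
        measure_mono (symmDiff_limSet_subset S k)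
    _ ≤ ∑' i : ℕ, volume ((S (k + i) \ S (k + i + 1)) ∪ (S (k + i + 1) \ S (k + i))) :=
        measure_iUnion_le _
    _ ≤ ∑' i : ℕ, ENNReal.ofReal ((1/2:ℝ) ^ (k + i)) := ENNReal.tsum_le_tsum (fun i => hA (k + i))
    _ ≤ ENNReal.ofReal (2 * (1/2:ℝ) ^ k) := tsum_half_bound k

lemma bounded_of_convex_finiteVol {Q : Set (Euc n)} (hQ : Convex ℝ Q) {x₀ : Euc n} {r : ℝ}
    (hr : 0 < r) (hball : ball x₀ r ⊆ Q) (hfin : volume Q ≠ ⊤) : Bornology.IsBounded Q := by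
  classical
  set c0 : ℝ≥0∞ := volume (ball x₀ (r/2)) with hc0
  have hc0pos : 0 < c0 := Metric.measure_ball_pos _ _ (by linarith)
  have hc0top : c0 ≠ ⊤ := measure_ball_lt_top.ne
  obtain ⟨K, hK⟩ : ∃ K : ℕ, volume Q < K * c0 := by
    obtain ⟨K, hK⟩ := ENNReal.exists_nat_gt (show volume Q / c0 ≠ ⊤ from
      (ENNReal.div_lt_top hfin hc0pos.ne').ne)
    exact ⟨K, by
      exact (ENNReal.div_lt_iff (Or.inl hc0pos.ne') (Or.inl hc0top)).1 hK⟩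
  rw [Metric.isBounded_iff_subset_closedBall x₀]
  refine ⟨2 * r * K, fun y hy => ?_⟩
  rw [Metric.mem_closedBall]
  by_contra hy'
  push_neg at hy'
  set R := dist y x₀ with hRdef
  have hRpos : 0 < R := lt_of_le_of_lt (by positivity) hy'
  set u : Euc n := R⁻¹ • (y - x₀) with hu
  have hKpos : 0 < (K:ℝ) := by
    by_contra hc
    push_neg at hc
    have : (K:ℕ) = 0 := by exact_mod_cast le_antisymm (by exact_mod_cast hc) (Nat.zero_le K)
    rw [this] at hK
    simp at hK
  set c : ℕ → Euc n := fun j => x₀ + ((j:ℝ) * r) • u with hc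
  -- each scaled ball is inside Q
  have hsub : ∀ j : ℕ, j < K → ball (c j) (r/2) ⊆ Q := by
    intro j hj z hz
    set t : ℝ := (j:ℝ) * r / R with ht
    have htnn : 0 ≤ t := by positivity
    have hjr : (j:ℝ) * r < R / 2 := by
      have h1 : (j:ℝ) * r ≤ ((K:ℝ) - 1) * r := by
        have : (j:ℝ) ≤ (K:ℝ) - 1 := by
          have : (j:ℝ) + 1 ≤ (K:ℝ) := by exact_mod_cast Nat.succ_le_of_lt hj
          linarith
        nlinarith
      nlinarith
    have hthalf : t ≤ 1/2 := by
      rw [ht, div_le_iff₀ hRpos]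
      nlinarith
    have h1t : (1:ℝ)/2 ≤ 1 - t := by linarith
    have h1tpos : 0 < 1 - t := by linarith
    -- c j = (1-t) • x₀ + t • y
    have hcj : c j = (1 - t) • x₀ + t • y := by
      have huu : ((j:ℝ) * r) • u = t • (y - x₀) := by
        rw [hu, smul_smul, ht, div_eq_mul_inv]
      show x₀ + ((j:ℝ) * r) • u = (1 - t) • x₀ + t • y
      rw [huu]
      module
    set w : Euc n := (1 - t)⁻¹ • (z - t • y) with hw
    have hwball : w ∈ ball x₀ r := by
      rw [mem_ball, dist_eq_norm]
      have hwx : w - x₀ = (1 - t)⁻¹ • (z - c j) := by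
        rw [hw, hcj, smul_sub, smul_sub]
        rw [smul_add]
        have h1 : (1 - t)⁻¹ • ((1 - t) • x₀) = x₀ := by
          rw [smul_smul, inv_mul_cancel₀ h1tpos.ne', one_smul]
        rw [h1]
        abel
      rw [hwx, norm_smul]
      have hz' : ‖z - c j‖ < r/2 := by rw [← dist_eq_norm]; exact hz
      have : |(1 - t)⁻¹| = (1 - t)⁻¹ := abs_of_pos (by positivity)
      rw [Real.norm_eq_abs, this]
      have hinv : (1 - t)⁻¹ ≤ 2 := by
        rw [inv_le_comm₀ h1tpos (by norm_num)]
        linarith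
      calc (1 - t)⁻¹ * ‖z - c j‖ ≤ 2 * ‖z - c j‖ := by
            apply mul_le_mul_of_nonneg_right hinv (norm_nonneg _)
        _ < 2 * (r/2) := by linarith
        _ = r := by ring
    have hzeq : (1 - t) • w + t • y = z := by
      rw [hw, smul_smul, mul_inv_cancel₀ h1tpos.ne', one_smul]
      abel
    rw [← hzeq]
    exact hQ (hball hwball) hy h1tpos.le htnn (by ring)
  -- the balls are pairwise disjoint
  have hnorm_u : ‖u‖ = 1 := by
    rw [hu, norm_smul, Real.norm_eq_abs, abs_of_pos (inv_pos.2 hRpos), ← dist_eq_norm, ← hRdef]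
    field_simp
  have hdisj : Set.Pairwise ↑(Finset.range K) (Function.onFun Disjoint (fun j => ball (c j) (r/2))) := by
    intro i _ j _ hij
    rw [Function.onFun, Set.disjoint_left]
    intro z hzi hzj
    have hdist : dist (c i) (c j) = |(i:ℝ) - (j:ℝ)| * r := by
      rw [dist_eq_norm, hc]
      have : (x₀ + ((i:ℝ) * r) • u) - (x₀ + ((j:ℝ) * r) • u) = (((i:ℝ) - (j:ℝ)) * r) • u := by
        module
      rw [this, norm_smul, hnorm_u, mul_one, Real.norm_eq_abs, abs_mul, abs_of_pos hr]
    have h1le : (1:ℝ) ≤ |(i:ℝ) - (j:ℝ)| := by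
      have : i ≠ j := hij
      rcases lt_or_gt_of_ne this with h | h
      · rw [abs_sub_comm, abs_of_pos (by exact_mod_cast sub_pos.2 (show (i:ℝ) < j by exact_mod_cast h))]
        have : (i:ℝ) + 1 ≤ (j:ℝ) := by exact_mod_cast Nat.succ_le_of_lt h
        linarith
      · rw [abs_of_pos (by exact_mod_cast sub_pos.2 (show (j:ℝ) < i by exact_mod_cast h))]
        have : (j:ℝ) + 1 ≤ (i:ℝ) := by exact_mod_cast Nat.succ_le_of_lt h
        linarith
    have : dist (c i) (c j) < r := by
      calc dist (c i) (c j) ≤ dist (c i) z + dist z (c j) := dist_triangle _ _ _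
        _ < r/2 + r/2 := by
            rw [dist_comm (c i) z]
            exact add_lt_add hzi hzj
        _ = r := by ring
    rw [hdist] at this
    nlinarith
  have hmeas : volume (⋃ j ∈ Finset.range K, ball (c j) (r/2)) =
      ∑ j ∈ Finset.range K, volume (ball (c j) (r/2)) :=
    measure_biUnion_finset hdisj (fun j _ => measurableSet_ball)
  have hcenter : ∀ j : ℕ, volume (ball (c j) (r/2)) = c0 := by
    intro j
    rw [hc0, Measure.addHaar_ball_center volume (c j), Measure.addHaar_ball_center volume x₀]
  have hsum : ∑ j ∈ Finset.range K, volume (ball (c j) (r/2)) = K * c0 := by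
    simp [hcenter]
  have hle : volume (⋃ j ∈ Finset.range K, ball (c j) (r/2)) ≤ volume Q := by
    apply measure_mono
    intro z hz
    rw [mem_iUnion₂] at hz
    obtain ⟨j, hj, hzj⟩ := hz
    exact hsub j (Finset.mem_range.1 hj) hzj
  rw [hmeas, hsum] at hle
  exact absurd (lt_of_lt_of_le hK hle) (lt_irrefl _)

end DelzAux

namespace DelzAux
variable {n : ℕ}

lemma add_diff_le_ofReal {P Q : Set (Euc n)} (hP : volume P ≠ ⊤) (hQ : volume Q ≠ ⊤) {ε : ℝ}
    (h : deltaV P Q < ε) : volume (P \ Q) + volume (Q \ P) ≤ ENNReal.ofReal ε := by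
  have ha : volume (P \ Q) ≠ ⊤ := (lt_of_le_of_lt (measure_mono diff_subset) hP.lt_top).ne
  have hb : volume (Q \ P) ≠ ⊤ := (lt_of_le_of_lt (measure_mono diff_subset) hQ.lt_top).ne
  rw [← ENNReal.ofReal_toReal ha, ← ENNReal.ofReal_toReal hb,
    ← ENNReal.ofReal_add ENNReal.toReal_nonneg ENNReal.toReal_nonneg]
  exact ENNReal.ofReal_le_ofReal h.le

end DelzAux


/-- `(C_p(n) ∪ {0}, δ^V)` is the completion of `(C_p(n), δ^V)`: every Cauchy
sequence `(P_m)` of proper convex bodies with respect to `δ^V` either has volume tending to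
`0` (i.e. converges to the added point `0`), or converges in `δ^V` to some proper convex
body `Q`. -/
theorem delzant_stmt_4 {n : ℕ} (P : ℕ → Set (Euc n)) (hP : ∀ m, IsProperBody (P m))
    (hCauchy : ∀ ε > (0 : ℝ), ∃ N, ∀ m ≥ N, ∀ m' ≥ N, deltaV (P m) (P m') < ε) :
    (Filter.Tendsto (fun m => (volume (P m)).toReal) Filter.atTop (nhds 0)) ∨
    (∃ Q : Set (Euc n), IsProperBody Q ∧
      Filter.Tendsto (fun m => deltaV (P m) Q) Filter.atTop (nhds 0)) := by
  classical
  have hfinP : ∀ m, volume (P m) ≠ ⊤ := fun m => (hP m).2.1.measure_lt_top.ne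
  -- the volumes form a Cauchy sequence of reals
  have hvCauchy : CauchySeq (fun m => (volume (P m)).toReal) := by
    rw [Metric.cauchySeq_iff]
    intro ε hε
    obtain ⟨N, hN⟩ := hCauchy ε hε
    refine ⟨N, fun m hm m' hm' => lt_of_le_of_lt ?_ (hN m hm m' hm')⟩
    rw [Real.dist_eq]
    exact DelzAux.abs_vol_sub_le (hfinP m) (hfinP m')
  obtain ⟨v, hv⟩ := cauchySeq_tendsto_of_complete hvCauchy
  by_cases hv0 : v = 0
  · left; rwa [hv0] at hv
  right
  have hvnn : 0 ≤ v := ge_of_tendsto' hv fun m => ENNReal.toReal_nonneg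
  have hvpos : 0 < v := lt_of_le_of_ne hvnn (Ne.symm hv0)
  -- a rapidly Cauchy subsequence
  have hNex : ∀ k : ℕ, ∃ N, ∀ m ≥ N, ∀ m' ≥ N, deltaV (P m) (P m') < (1/2:ℝ)^k :=
    fun k => hCauchy _ (by positivity)
  choose N hNs using hNex
  let mseq : ℕ → ℕ := fun k => Nat.rec (N 0) (fun k ih => max (N (k+1)) (ih+1)) k
  have hmseqN : ∀ k, N k ≤ mseq k := by
    intro k
    cases k with
    | zero => exact le_refl _
    | succ k => exact le_max_left _ _
  have hmono : ∀ k, mseq k < mseq (k+1) :=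
    fun k => lt_of_lt_of_le (Nat.lt_succ_self _) (le_max_right _ _)
  have hmseq_mono : StrictMono mseq := strictMono_nat_of_lt_succ hmono
  have hkey : ∀ k, ∀ a ≥ mseq k, deltaV (P a) (P (mseq k)) < (1/2:ℝ)^k :=
    fun k a ha => hNs k a (le_trans (hmseqN k) ha) (mseq k) (hmseqN k)
  set S : ℕ → Set (Euc n) := fun k => P (mseq k) with hS
  have hfinS : ∀ k, volume (S k) ≠ ⊤ := fun k => hfinP _
  have hA : ∀ j, volume ((S j \ S (j+1)) ∪ (S (j+1) \ S j)) ≤ ENNReal.ofReal ((1/2:ℝ)^j) := by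
    intro j
    have h := hkey j (mseq (j+1)) (hmono j).le
    calc volume ((S j \ S (j+1)) ∪ (S (j+1) \ S j))
        ≤ volume (S j \ S (j+1)) + volume (S (j+1) \ S j) := measure_union_le _ _
      _ = volume (S (j+1) \ S j) + volume (S j \ S (j+1)) := add_comm _ _
      _ ≤ ENNReal.ofReal ((1/2:ℝ)^j) := DelzAux.add_diff_le_ofReal (hfinS (j+1)) (hfinS j) h
  set L : Set (Euc n) := DelzAux.limSet S with hLdef
  have hLconv : Convex ℝ L := DelzAux.limSet_convex S (fun j => (hP _).2.2.1)
  have hSD := DelzAux.measure_symmDiff_limSet_le S hA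
  have hSL : ∀ k, volume (S k \ L) ≤ ENNReal.ofReal (2 * (1/2:ℝ)^k) :=
    fun k => le_trans (measure_mono subset_union_left) (hSD k)
  have hLS : ∀ k, volume (L \ S k) ≤ ENNReal.ofReal (2 * (1/2:ℝ)^k) :=
    fun k => le_trans (measure_mono subset_union_right) (hSD k)
  have hLfin : volume L ≠ ⊤ := by
    have h1 : volume L ≤ volume (S 0) + volume (L \ S 0) := by
      calc volume L = volume ((L ∩ S 0) ∪ (L \ S 0)) := by rw [Set.inter_union_diff]
        _ ≤ volume (L ∩ S 0) + volume (L \ S 0) := measure_union_le _ _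
        _ ≤ volume (S 0) + volume (L \ S 0) :=
            add_le_add (measure_mono Set.inter_subset_right) le_rfl
    exact (lt_of_le_of_lt h1 (ENNReal.add_lt_top.2
      ⟨(hfinS 0).lt_top, lt_of_le_of_lt (hLS 0) ENNReal.ofReal_lt_top⟩)).ne
  -- volume of L is positive
  have hvS : Filter.Tendsto (fun k => (volume (S k)).toReal) Filter.atTop (nhds v) :=
    hv.comp hmseq_mono.tendsto_atTop
  have hLpos : volume L ≠ 0 := by
    intro hL0
    obtain ⟨k₀, hk₀⟩ := (Metric.tendsto_atTop.1 hvS) (v/4) (by positivity)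
    obtain ⟨k₁, hk₁⟩ : ∃ k : ℕ, ((1:ℝ)/2)^k < v/8 :=
      exists_pow_lt_of_lt_one (by positivity) (by norm_num)
    set k := max k₀ k₁
    have hdist := hk₀ k (le_max_left _ _)
    rw [Real.dist_eq, abs_lt] at hdist
    have hbig : v/2 < (volume (S k)).toReal := by linarith [hdist.1]
    have hsmall : (volume (S k)).toReal ≤ 2 * (1/2:ℝ)^k := by
      have h1 : volume (S k) ≤ volume L + volume (S k \ L) := by
        calc volume (S k) = volume ((S k ∩ L) ∪ (S k \ L)) := by rw [Set.inter_union_diff]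
          _ ≤ volume (S k ∩ L) + volume (S k \ L) := measure_union_le _ _
          _ ≤ volume L + volume (S k \ L) :=
              add_le_add (measure_mono Set.inter_subset_right) le_rfl
      rw [hL0, zero_add] at h1
      have h2 := le_trans h1 (hSL k)
      have := ENNReal.toReal_mono ENNReal.ofReal_ne_top h2
      rwa [ENNReal.toReal_ofReal (by positivity)] at this
    have hpow : ((1:ℝ)/2)^k ≤ ((1:ℝ)/2)^k₁ :=
      pow_le_pow_of_le_one (by norm_num) (by norm_num) (le_max_right _ _)
    nlinarith [hpow, hk₁, hbig, hsmall]
  set Q : Set (Euc n) := closure L with hQdef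
  have hQconv : Convex ℝ Q := hLconv.closure
  have hQL : volume (Q \ L) = 0 := by
    refine measure_mono_null (fun x hx => ?_) (hLconv.addHaar_frontier volume)
    exact ⟨hx.1, fun hi => hx.2 (interior_subset hi)⟩
  have hQfin : volume Q ≠ ⊤ := by
    have h1 : volume Q ≤ volume L + volume (Q \ L) := by
      calc volume Q = volume ((Q ∩ L) ∪ (Q \ L)) := by rw [Set.inter_union_diff]
        _ ≤ volume (Q ∩ L) + volume (Q \ L) := measure_union_le _ _
        _ ≤ volume L + volume (Q \ L) :=
            add_le_add (measure_mono Set.inter_subset_right) le_rfl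
    rw [hQL, add_zero] at h1
    exact (lt_of_le_of_lt h1 hLfin.lt_top).ne
  have hQpos : volume Q ≠ 0 := fun h => hLpos (measure_mono_null subset_closure h)
  have hQint : (interior Q).Nonempty := by
    by_contra h
    rw [Set.not_nonempty_iff_eq_empty] at h
    have hspan : affineSpan ℝ Q ≠ ⊤ := by
      intro htop
      have := hQconv.interior_nonempty_iff_affineSpan_eq_top.2 htop
      rw [h] at this
      exact this.ne_empty rfl
    exact hQpos (measure_mono_null (subset_affineSpan ℝ Q)
      (Measure.addHaar_affineSubspace volume _ hspan))
  obtain ⟨x₀, hx₀⟩ := hQint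
  obtain ⟨r, hr, hball⟩ := Metric.isOpen_iff.1 isOpen_interior x₀ hx₀
  have hQbdd : Bornology.IsBounded Q :=
    DelzAux.bounded_of_convex_finiteVol hQconv hr (hball.trans interior_subset) hQfin
  have hQcompact : IsCompact Q := Metric.isCompact_of_isClosed_isBounded isClosed_closure hQbdd
  refine ⟨Q, ⟨⟨x₀, interior_subset hx₀⟩, hQcompact, hQconv, ⟨x₀, hx₀⟩⟩, ?_⟩
  rw [Metric.tendsto_atTop]
  intro ε hε
  obtain ⟨k, hk⟩ : ∃ k : ℕ, ((1:ℝ)/2)^k < ε/6 :=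
    exists_pow_lt_of_lt_one (by positivity) (by norm_num)
  refine ⟨mseq k, fun m hm => ?_⟩
  rw [Real.dist_eq, sub_zero, abs_of_nonneg (DelzAux.deltaV_nonneg _ _)]
  have h1 : volume (P m \ Q) ≤ ENNReal.ofReal (3 * (1/2:ℝ)^k) := by
    calc volume (P m \ Q) ≤ volume (P m \ S k) + volume (S k \ Q) :=
          DelzAux.meas_diff_triangle _ _ _
      _ ≤ ENNReal.ofReal ((1/2:ℝ)^k) + ENNReal.ofReal (2 * (1/2:ℝ)^k) := by
          refine add_le_add (DelzAux.diff_le_ofReal (hfinP m) (hkey k m hm)) ?_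
          refine le_trans (measure_mono fun x hx => ?_) (hSL k)
          exact ⟨hx.1, fun hl => hx.2 (subset_closure hl)⟩
      _ = ENNReal.ofReal (3 * (1/2:ℝ)^k) := by
          rw [← ENNReal.ofReal_add (by positivity) (by positivity)]
          ring_nf
  have h2 : volume (Q \ P m) ≤ ENNReal.ofReal (3 * (1/2:ℝ)^k) := by
    calc volume (Q \ P m) ≤ volume (Q \ S k) + volume (S k \ P m) :=
          DelzAux.meas_diff_triangle _ _ _
      _ ≤ (volume (Q \ L) + volume (L \ S k)) + volume (S k \ P m) :=
          add_le_add (DelzAux.meas_diff_triangle _ _ _) le_rfl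
      _ ≤ (0 + ENNReal.ofReal (2 * (1/2:ℝ)^k)) + ENNReal.ofReal ((1/2:ℝ)^k) := by
          refine add_le_add (add_le_add hQL.le (hLS k)) ?_
          exact DelzAux.diff_le_ofReal' (hfinS k) (hkey k m hm)
      _ = ENNReal.ofReal (3 * (1/2:ℝ)^k) := by
          rw [zero_add, ← ENNReal.ofReal_add (by positivity) (by positivity)]
          ring_nf
  have hfinal := DelzAux.deltaV_le_toReal (P := P m) (Q := Q)
    ENNReal.ofReal_ne_top ENNReal.ofReal_ne_top h1 h2
  rw [ENNReal.toReal_ofReal (by positivity)] at hfinal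
  calc deltaV (P m) Q ≤ 3 * (1/2:ℝ)^k + 3 * (1/2:ℝ)^k := hfinal
    _ = 6 * ((1:ℝ)/2)^k := by ring
    _ < ε := by linarith
end
end

section
/- The function δ̃^V([P],[Q]) = inf{δ^V(P′, Q′) : P′ ∈ [P], Q′ ∈ [Q]} is a metric on the set of AGL(n,ℤ)-orbits of proper convex bodies in ℝⁿ: it is symmetric, satisfies the triangle inequality, vanishes on equal orbits, and is strictly positive on distinct orbits. -/
/- Common definitions: polytopes, faces, Delzant polytopes, normal fans,
   the symmetric-difference and Hausdorff metrics, and the AGL(n,ℤ) action. -/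

open Set MeasureTheory Metric
open scoped Pointwise

noncomputable section

namespace Delzant7

variable {n : ℕ}

/-- coordinate bound in Euclidean space -/
theorem coord_le_norm (x : Euc n) (i : Fin n) : |x i| ≤ ‖x‖ := by
  rw [EuclideanSpace.norm_eq, show |x i| = Real.sqrt ((x i)^2) by rw [Real.sqrt_sq_eq_abs]]
  apply Real.sqrt_le_sqrt
  simp only [Real.norm_eq_abs, sq_abs]
  exact Finset.single_le_sum (f := fun j => (x j)^2) (fun j _ => sq_nonneg _) (Finset.mem_univ i)

/-- The linear part of `aglMap`. -/
def L (A : Matrix (Fin n) (Fin n) ℤ) : Euc n →ₗ[ℝ] Euc n :=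
  Matrix.toEuclideanLin (A.map (Int.cast : ℤ → ℝ))

theorem aglMap_eq (A : Matrix (Fin n) (Fin n) ℤ) (c : Euc n) :
    aglMap A c = fun x => L A x + c := by
  funext x
  ext i
  rfl

theorem L_det (A : Matrix (Fin n) (Fin n) ℤ) : LinearMap.det (L A) = ((A.det : ℤ) : ℝ) := by
  have h1 : L A =
      ((WithLp.linearEquiv 2 ℝ (Fin n → ℝ)).symm : (Fin n → ℝ) →ₗ[ℝ] Euc n) ∘ₗ
        (Matrix.toLin' (A.map (Int.cast : ℤ → ℝ))) ∘ₗ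
          ((WithLp.linearEquiv 2 ℝ (Fin n → ℝ)) : Euc n →ₗ[ℝ] (Fin n → ℝ)) := by
    ext x; rfl
  rw [h1]
  have h2 := LinearMap.det_conj (Matrix.toLin' (A.map (Int.cast : ℤ → ℝ)))
    (WithLp.linearEquiv 2 ℝ (Fin n → ℝ)).symm
  have h3 := LinearMap.det_toLin' (A.map (Int.cast : ℤ → ℝ))
  have h4 : (A.map (Int.cast : ℤ → ℝ)).det = ((A.det : ℤ) : ℝ) :=
    (RingHom.map_det (Int.castRingHom ℝ) A).symm
  simpa [h3, h4] using h2

theorem aglz_isUnit {A : Matrix (Fin n) (Fin n) ℤ} (hA : IsAGLZ A) : IsUnit A.det := by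
  rcases hA with h | h <;> simp [h]

theorem aglz_abs_det {A : Matrix (Fin n) (Fin n) ℤ} (hA : IsAGLZ A) :
    |((A.det : ℤ) : ℝ)| = 1 := by
  rcases hA with h | h <;> simp [h]

/-- `aglMap` with unimodular `A` preserves volume. -/
theorem vol_aglMap_image {A : Matrix (Fin n) (Fin n) ℤ} (hA : IsAGLZ A) (c : Euc n)
    (S : Set (Euc n)) : volume (aglMap A c '' S) = volume S := by
  rw [aglMap_eq]
  have h1 : (fun x => L A x + c) '' S = (fun y => y + c) '' ((L A) '' S) := by
    rw [Set.image_image]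
  rw [h1, Set.image_add_right, measure_preimage_add_right,
    MeasureTheory.Measure.addHaar_image_linearMap, L_det A, aglz_abs_det hA]
  simp

theorem L_mul (A B : Matrix (Fin n) (Fin n) ℤ) : L (A * B) = (L A).comp (L B) := by
  apply LinearMap.ext; intro v
  have hm : (A * B).map (Int.cast : ℤ → ℝ) =
      A.map (Int.cast : ℤ → ℝ) * B.map (Int.cast : ℤ → ℝ) := by
    ext i j
    simp [Matrix.map_apply, Matrix.mul_apply]
  simp only [L, Matrix.toEuclideanLin_apply, LinearMap.comp_apply, hm]
  simp [Matrix.mulVec_mulVec]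

theorem L_one : L (1 : Matrix (Fin n) (Fin n) ℤ) = LinearMap.id := by
  apply LinearMap.ext; intro v
  have h1 : (1 : Matrix (Fin n) (Fin n) ℤ).map (Int.cast : ℤ → ℝ) = 1 := by
    ext i j; by_cases h : i = j <;> simp [Matrix.map_apply, Matrix.one_apply, h]
  simp [L, Matrix.toEuclideanLin_apply, h1, Matrix.one_mulVec]

theorem aglMap_comp (A B : Matrix (Fin n) (Fin n) ℤ) (c d : Euc n) (x : Euc n) :
    aglMap A c (aglMap B d x) = aglMap (A * B) (aglMap A c d) x := by
  simp only [aglMap_eq, L_mul, map_add, LinearMap.comp_apply]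
  abel

theorem aglMap_one_zero (x : Euc n) : aglMap (1 : Matrix (Fin n) (Fin n) ℤ) (0 : Euc n) x = x := by
  simp [aglMap_eq, L_one]

theorem exists_agl_inverse {A : Matrix (Fin n) (Fin n) ℤ} (hA : IsAGLZ A) (c : Euc n) :
    ∃ B c', IsAGLZ B ∧ (∀ x, aglMap B c' (aglMap A c x) = x) ∧
      (∀ x, aglMap A c (aglMap B c' x) = x) := by
  have hu := aglz_isUnit hA
  have hdet : A.det * A⁻¹.det = 1 := by
    rw [← Matrix.det_mul, Matrix.mul_nonsing_inv A hu, Matrix.det_one]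
  have hBA : ∀ x : Euc n, L A⁻¹ (L A x) = x := by
    intro x
    have : L (A⁻¹ * A) = (L A⁻¹).comp (L A) := L_mul _ _
    rw [Matrix.nonsing_inv_mul A hu, L_one] at this
    have := congrArg (fun f => f x) this.symm
    simpa using this
  have hAB : ∀ x : Euc n, L A (L A⁻¹ x) = x := by
    intro x
    have : L (A * A⁻¹) = (L A).comp (L A⁻¹) := L_mul _ _
    rw [Matrix.mul_nonsing_inv A hu, L_one] at this
    have := congrArg (fun f => f x) this.symm
    simpa using this
  refine ⟨A⁻¹, -(L A⁻¹ c), ?_, ?_, ?_⟩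
  · rcases hA with h | h
    · left; rw [h] at hdet; omega
    · right; rw [h] at hdet; omega
  · intro x
    simp only [aglMap_eq, map_add, hBA]
    abel
  · intro x
    simp only [aglMap_eq, map_add, map_neg, hAB]
    abel
theorem inOrbit_refl (P : Set (Euc n)) : inOrbit P P := by
  refine ⟨1, 0, Or.inl Matrix.det_one, ?_⟩
  rw [show aglMap (1 : Matrix (Fin n) (Fin n) ℤ) (0 : Euc n) = id from funext aglMap_one_zero]
  simp

theorem inOrbit_symm {P Q : Set (Euc n)} (h : inOrbit P Q) : inOrbit Q P := by
  obtain ⟨A, c, hA, rfl⟩ := h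
  obtain ⟨B, c', hB, hleft, _⟩ := exists_agl_inverse hA c
  refine ⟨B, c', hB, ?_⟩
  rw [← Set.image_comp]
  have : (aglMap B c' ∘ aglMap A c) = id := funext hleft
  rw [this, Set.image_id]

theorem inOrbit_trans {P Q R : Set (Euc n)} (h1 : inOrbit P Q) (h2 : inOrbit Q R) :
    inOrbit P R := by
  obtain ⟨A, c, hA, rfl⟩ := h1
  obtain ⟨B, d, hB, rfl⟩ := h2
  refine ⟨B * A, aglMap B d c, ?_, ?_⟩
  · rcases hA with h | h <;> rcases hB with h' | h' <;>
      simp [IsAGLZ, Matrix.det_mul, h, h']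
  · rw [← Set.image_comp]
    apply Set.image_congr
    intro x _
    exact aglMap_comp B A d c x

theorem aglMap_injective {A : Matrix (Fin n) (Fin n) ℤ} (hA : IsAGLZ A) (c : Euc n) :
    Function.Injective (aglMap A c) := by
  obtain ⟨B, c', _, hleft, _⟩ := exists_agl_inverse hA c
  exact Function.LeftInverse.injective hleft

theorem deltaV_nonneg (P Q : Set (Euc n)) : 0 ≤ deltaV P Q :=
  add_nonneg ENNReal.toReal_nonneg ENNReal.toReal_nonneg

theorem deltaV_comm (P Q : Set (Euc n)) : deltaV P Q = deltaV Q P := add_comm _ _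

/-- invariance of `deltaV` under a common `AGL(n,ℤ)` transformation. -/
theorem deltaV_aglMap {A : Matrix (Fin n) (Fin n) ℤ} (hA : IsAGLZ A) (c : Euc n)
    (S T : Set (Euc n)) : deltaV (aglMap A c '' S) (aglMap A c '' T) = deltaV S T := by
  have hinj := aglMap_injective hA c
  unfold deltaV
  rw [← Set.image_diff hinj, ← Set.image_diff hinj, vol_aglMap_image hA, vol_aglMap_image hA]

/-- The defining set of `deltaVOrbit`. -/
def orbSet (P Q : Set (Euc n)) : Set ℝ :=
  {d | ∃ P' Q', inOrbit P P' ∧ inOrbit Q Q' ∧ d = deltaV P' Q'}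

theorem deltaVOrbit_eq (P Q : Set (Euc n)) : deltaVOrbit P Q = sInf (orbSet P Q) := rfl

theorem orbSet_nonempty (P Q : Set (Euc n)) : (orbSet P Q).Nonempty :=
  ⟨deltaV P Q, P, Q, inOrbit_refl P, inOrbit_refl Q, rfl⟩

theorem orbSet_nonneg (P Q : Set (Euc n)) : ∀ d ∈ orbSet P Q, 0 ≤ d := by
  rintro d ⟨P', Q', _, _, rfl⟩
  exact deltaV_nonneg _ _

theorem orbSet_bddBelow (P Q : Set (Euc n)) : BddBelow (orbSet P Q) :=
  ⟨0, fun d hd => orbSet_nonneg P Q d hd⟩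

theorem deltaVOrbit_nonneg (P Q : Set (Euc n)) : 0 ≤ deltaVOrbit P Q :=
  Real.sInf_nonneg (orbSet_nonneg P Q)

/-- each element of `orbSet P Q` is realized with `P` fixed. -/
theorem orbSet_reduce {P Q : Set (Euc n)} {d : ℝ} (hd : d ∈ orbSet P Q) :
    ∃ Q'', inOrbit Q Q'' ∧ d = deltaV P Q'' := by
  obtain ⟨P', Q', hP', hQ', rfl⟩ := hd
  obtain ⟨A, c, hA, rfl⟩ := hP'
  obtain ⟨B, c', hB, hleft, hright⟩ := exists_agl_inverse hA c
  refine ⟨aglMap B c' '' Q', inOrbit_trans hQ' ⟨B, c', hB, rfl⟩, ?_⟩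
  have h1 : aglMap B c' '' (aglMap A c '' P) = P := by
    rw [← Set.image_comp, show (aglMap B c' ∘ aglMap A c) = id from funext hleft, Set.image_id]
  calc deltaV (aglMap A c '' P) Q' = deltaV (aglMap B c' '' (aglMap A c '' P))
        (aglMap B c' '' Q') := (deltaV_aglMap hB c' _ _).symm
    _ = deltaV P (aglMap B c' '' Q') := by rw [h1]

theorem deltaVOrbit_comm (P Q : Set (Euc n)) : deltaVOrbit P Q = deltaVOrbit Q P := by
  have hs : ∀ (P Q : Set (Euc n)), orbSet P Q ⊆ orbSet Q P := by
    rintro P Q d ⟨P', Q', hP', hQ', rfl⟩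
    exact ⟨Q', P', hQ', hP', deltaV_comm _ _⟩
  rw [deltaVOrbit_eq, deltaVOrbit_eq,
    Set.Subset.antisymm (hs P Q) (hs Q P)]

theorem deltaVOrbit_zero_of_inOrbit {P Q : Set (Euc n)} (h : inOrbit P Q) :
    deltaVOrbit P Q = 0 := by
  have h0 : (0 : ℝ) ∈ orbSet P Q := by
    refine ⟨Q, Q, h, inOrbit_refl Q, ?_⟩
    simp [deltaV]
  exact le_antisymm (csInf_le (orbSet_bddBelow P Q) h0) (deltaVOrbit_nonneg P Q)

theorem deltaV_triangle (P Q R : Set (Euc n)) (hP : volume P ≠ ⊤) (hQ : volume Q ≠ ⊤)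
    (hR : volume R ≠ ⊤) : deltaV P R ≤ deltaV P Q + deltaV Q R := by
  have key : ∀ S T U : Set (Euc n), volume S ≠ ⊤ → volume T ≠ ⊤ →
      (volume (S \ U)).toReal ≤ (volume (S \ T)).toReal + (volume (T \ U)).toReal := by
    intro S T U hS hT
    have hsub : S \ U ⊆ (S \ T) ∪ (T \ U) := by
      intro x hx
      by_cases hxT : x ∈ T
      · exact Or.inr ⟨hxT, hx.2⟩
      · exact Or.inl ⟨hx.1, hxT⟩
    have h1 : volume (S \ U) ≤ volume (S \ T) + volume (T \ U) :=
      le_trans (measure_mono hsub) (measure_union_le _ _)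
    have hST : volume (S \ T) ≠ ⊤ := ne_top_of_le_ne_top hS (measure_mono Set.diff_subset)
    have hTU : volume (T \ U) ≠ ⊤ := ne_top_of_le_ne_top hT (measure_mono Set.diff_subset)
    calc (volume (S \ U)).toReal ≤ (volume (S \ T) + volume (T \ U)).toReal :=
          ENNReal.toReal_mono (by simp [ENNReal.add_ne_top, hST, hTU]) h1
      _ = (volume (S \ T)).toReal + (volume (T \ U)).toReal := ENNReal.toReal_add hST hTU
  have h1 := key P Q R hP hQ
  have h2 := key R Q P hR hQ
  unfold deltaV
  linarith
theorem aglMap_continuous (A : Matrix (Fin n) (Fin n) ℤ) (c : Euc n) :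
    Continuous (aglMap A c) := by
  rw [aglMap_eq]
  exact ((L A).continuous_of_finiteDimensional).add continuous_const

theorem inOrbit_isCompact {P P' : Set (Euc n)} (h : inOrbit P P') (hP : IsCompact P) :
    IsCompact P' := by
  obtain ⟨A, c, hA, rfl⟩ := h
  exact hP.image (aglMap_continuous A c)

theorem inOrbit_vol_ne_top {P P' : Set (Euc n)} (h : inOrbit P P') (hP : IsCompact P) :
    volume P' ≠ ⊤ :=
  (inOrbit_isCompact h hP).measure_lt_top.ne

theorem deltaVOrbit_triangle {P Q R : Set (Euc n)} (hP : IsCompact P) (hQ : IsCompact Q)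
    (hR : IsCompact R) : deltaVOrbit P R ≤ deltaVOrbit P Q + deltaVOrbit Q R := by
  have key : ∀ d1 ∈ orbSet P Q, ∀ d2 ∈ orbSet Q R, deltaVOrbit P R ≤ d1 + d2 := by
    rintro d1 ⟨P', Q', hP', hQ', rfl⟩ d2 ⟨Q'', R'', hQ'', hR'', rfl⟩
    obtain ⟨A, c, hA, hQeq⟩ : inOrbit Q' Q'' := inOrbit_trans (inOrbit_symm hQ') hQ''
    have hd1 : deltaV P' Q' = deltaV (aglMap A c '' P') Q'' := by
      rw [hQeq, deltaV_aglMap hA]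
    have hP'' : inOrbit P (aglMap A c '' P') := inOrbit_trans hP' ⟨A, c, hA, rfl⟩
    have hmem : deltaV (aglMap A c '' P') R'' ∈ orbSet P R := ⟨_, _, hP'', hR'', rfl⟩
    have htri : deltaV (aglMap A c '' P') R'' ≤
        deltaV (aglMap A c '' P') Q'' + deltaV Q'' R'' :=
      deltaV_triangle _ _ _ (inOrbit_vol_ne_top hP'' hP) (inOrbit_vol_ne_top hQ'' hQ)
        (inOrbit_vol_ne_top hR'' hR)
    calc deltaVOrbit P R ≤ deltaV (aglMap A c '' P') R'' :=
          csInf_le (orbSet_bddBelow P R) hmem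
      _ ≤ deltaV (aglMap A c '' P') Q'' + deltaV Q'' R'' := htri
      _ = deltaV P' Q' + deltaV Q'' R'' := by rw [hd1]
  rw [show deltaVOrbit P Q = sInf (orbSet P Q) from rfl,
    show deltaVOrbit Q R = sInf (orbSet Q R) from rfl]
  have h1 : deltaVOrbit P R - sInf (orbSet Q R) ≤ sInf (orbSet P Q) := by
    apply le_csInf (orbSet_nonempty P Q)
    intro d1 hd1
    rw [sub_le_iff_le_add, add_comm]
    rw [← sub_le_iff_le_add]
    apply le_csInf (orbSet_nonempty Q R)
    intro d2 hd2
    rw [sub_le_iff_le_add]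
    calc deltaVOrbit P R ≤ d1 + d2 := key d1 hd1 d2 hd2
      _ = d2 + d1 := add_comm _ _
  linarith
theorem subset_closure_interior {s : Set (Euc n)} (hs : Convex ℝ s)
    (hne : (interior s).Nonempty) : s ⊆ closure (interior s) := by
  intro x hx
  obtain ⟨y, hy⟩ := hne
  rw [Metric.mem_closure_iff]
  intro ε hε
  have hpos : 0 < ‖y - x‖ + 1 := by positivity
  set t : ℝ := min 1 (ε / (‖y - x‖ + 1)) with ht
  have ht0 : 0 < t := lt_min one_pos (by positivity)
  have ht1 : t ≤ 1 := min_le_left _ _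
  refine ⟨x + t • (y - x), hs.add_smul_sub_mem_interior hx hy ⟨ht0, ht1⟩, ?_⟩
  rw [dist_self_add_right, norm_smul, Real.norm_eq_abs, abs_of_pos ht0]
  have hle : t ≤ ε / (‖y - x‖ + 1) := min_le_right _ _
  calc t * ‖y - x‖ ≤ (ε / (‖y - x‖ + 1)) * ‖y - x‖ :=
        mul_le_mul_of_nonneg_right hle (norm_nonneg _)
    _ < ε := by
        rw [div_mul_eq_mul_div, div_lt_iff₀ hpos]
        nlinarith [norm_nonneg (y - x)]

theorem subset_ball_of_small {P K : Set (Euc n)} {D : ℝ} (hD : 0 < D)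
    (hPD : P ⊆ Metric.closedBall 0 D) (hK : Convex ℝ K) (hKtop : volume K ≠ ⊤)
    (hsmall : (volume (K \ P)).toReal < (4 : ℝ)⁻¹ ^ n * (volume (K ∩ P)).toReal) :
    K ⊆ Metric.closedBall 0 (2 * D) := by
  intro x hx
  by_contra hxout
  have hxn : 2 * D < ‖x‖ := by
    rw [Metric.mem_closedBall, dist_zero_right] at hxout
    exact not_le.mp hxout
  set w : Euc n := (3/4 : ℝ) • x with hw
  set T : Set (Euc n) := (fun s => (4 : ℝ)⁻¹ • s + w) '' (K ∩ P) with hT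
  have hTK : T ⊆ K := by
    rintro _ ⟨s, hs, rfl⟩
    exact hK hs.1 hx (by norm_num) (by norm_num) (by norm_num)
  have hTco : ∀ y ∈ T, y ∉ P := by
    rintro _ ⟨s, hs, rfl⟩ hyP
    have hsD : ‖s‖ ≤ D := by
      have := hPD hs.2; rwa [Metric.mem_closedBall, dist_zero_right] at this
    have hyD : ‖(4 : ℝ)⁻¹ • s + w‖ ≤ D := by
      have := hPD hyP; rwa [Metric.mem_closedBall, dist_zero_right] at this
    have h1 : ‖w‖ ≤ ‖(4 : ℝ)⁻¹ • s + w‖ + ‖(4 : ℝ)⁻¹ • s‖ := by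
      have h2 : w = ((4 : ℝ)⁻¹ • s + w) - (4 : ℝ)⁻¹ • s := by abel
      calc ‖w‖ = ‖((4 : ℝ)⁻¹ • s + w) - (4 : ℝ)⁻¹ • s‖ := by rw [← h2]
        _ ≤ _ := norm_sub_le _ _
    rw [hw, norm_smul, norm_smul] at *
    simp only [Real.norm_eq_abs] at h1
    rw [abs_of_nonneg (by norm_num : (0:ℝ) ≤ 3/4), abs_of_nonneg (by norm_num : (0:ℝ) ≤ (4:ℝ)⁻¹)]
      at h1
    nlinarith
  have hTsub : T ⊆ K \ P := fun y hy => ⟨hTK hy, hTco y hy⟩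
  -- volume of T
  have hvolT : volume T = ENNReal.ofReal ((4 : ℝ)⁻¹ ^ n) * volume (K ∩ P) := by
    have h1 : T = (fun y => y + w) '' (((4 : ℝ)⁻¹) • (K ∩ P)) := by
      rw [← Set.image_smul, Set.image_image]
    rw [h1, Set.image_add_right, measure_preimage_add_right,
      MeasureTheory.Measure.addHaar_smul]
    congr 2
    rw [finrank_euclideanSpace_fin]
    rw [abs_of_nonneg (by positivity)]
  have hKPtop : volume (K ∩ P) ≠ ⊤ :=
    ne_top_of_le_ne_top hKtop (measure_mono Set.inter_subset_left)
  have hKdtop : volume (K \ P) ≠ ⊤ :=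
    ne_top_of_le_ne_top hKtop (measure_mono Set.diff_subset)
  have hmono : (volume T).toReal ≤ (volume (K \ P)).toReal :=
    ENNReal.toReal_mono hKdtop (measure_mono hTsub)
  rw [hvolT, ENNReal.toReal_mul, ENNReal.toReal_ofReal (by positivity)] at hmono
  linarith

theorem entry_bound {Q : Set (Euc n)} {A : Matrix (Fin n) (Fin n) ℤ} {c q0 : Euc n}
    {r D : ℝ} (hr : 0 < r) (hball : Metric.ball q0 r ⊆ Q)
    (himg : aglMap A c '' Q ⊆ Metric.closedBall 0 (2 * D)) (i j : Fin n) :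
    |((A i j : ℤ) : ℝ)| ≤ 8 * D / r := by
  set x1 : Euc n := q0 + (r/2) • EuclideanSpace.single j (1:ℝ) with hx1
  have hx0Q : q0 ∈ Q := hball (Metric.mem_ball_self hr)
  have hx1Q : x1 ∈ Q := by
    apply hball
    rw [Metric.mem_ball, dist_eq_norm, hx1, add_sub_cancel_left, norm_smul,
      EuclideanSpace.norm_single]
    simp only [Real.norm_eq_abs, norm_one]
    rw [abs_of_pos (by positivity)]
    linarith
  set y0 := aglMap A c q0 with hy0
  set y1 := aglMap A c x1 with hy1
  have hy0m : ‖y0‖ ≤ 2 * D := by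
    have := himg (Set.mem_image_of_mem _ hx0Q)
    rwa [Metric.mem_closedBall, dist_zero_right] at this
  have hy1m : ‖y1‖ ≤ 2 * D := by
    have := himg (Set.mem_image_of_mem _ hx1Q)
    rwa [Metric.mem_closedBall, dist_zero_right] at this
  have hdiff : (y1 - y0) i = (r/2) * ((A i j : ℤ) : ℝ) := by
    show y1 i - y0 i = _
    rw [hy1, hy0]
    show (∑ j', ((A i j' : ℤ) : ℝ) * x1 j') + c i - ((∑ j', ((A i j' : ℤ) : ℝ) * q0 j') + c i) = _
    have happ : ∀ j', (x1 : Euc n) j' = q0 j' + (r/2) * (if j' = j then 1 else 0) := by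
      intro j'
      show q0 j' + (r/2) * (EuclideanSpace.single j (1:ℝ)) j' = _
      rw [EuclideanSpace.single_apply]
    simp only [happ]
    rw [show ∀ a b : ℝ, (a + b) = (a + b) from fun _ _ => rfl]
    have hsum : ∑ j', ((A i j' : ℤ) : ℝ) * (q0 j' + (r/2) * (if j' = j then 1 else 0)) =
        (∑ j', ((A i j' : ℤ) : ℝ) * q0 j') + (r/2) * ((A i j : ℤ) : ℝ) := by
      rw [show (∑ j', ((A i j' : ℤ) : ℝ) * (q0 j' + (r/2) * (if j' = j then 1 else 0))) =
          ∑ j', (((A i j' : ℤ) : ℝ) * q0 j' +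
            (if j' = j then ((A i j' : ℤ) : ℝ) * (r/2) else 0)) from
          Finset.sum_congr rfl fun j' _ => by by_cases h : j' = j <;> simp [h] <;> ring]
      rw [Finset.sum_add_distrib, Finset.sum_ite_eq' Finset.univ j
        (fun j' => ((A i j' : ℤ) : ℝ) * (r/2))]
      simp [mul_comm]
    rw [hsum]; ring
  have hcoord : |(y1 - y0) i| ≤ ‖y1 - y0‖ := coord_le_norm _ i
  have hnorm : ‖y1 - y0‖ ≤ 4 * D := by
    calc ‖y1 - y0‖ ≤ ‖y1‖ + ‖y0‖ := norm_sub_le _ _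
      _ ≤ 4 * D := by linarith
  rw [hdiff, abs_mul, abs_of_pos (by positivity : (0:ℝ) < r/2)] at hcoord
  rw [le_div_iff₀ hr]
  nlinarith [abs_nonneg ((A i j : ℤ) : ℝ)]
theorem aglMap_image_convex (A : Matrix (Fin n) (Fin n) ℤ) (c : Euc n) {Q : Set (Euc n)}
    (hQ : Convex ℝ Q) : Convex ℝ (aglMap A c '' Q) := by
  have h1 : aglMap A c '' Q = (fun y => c + y) '' ((L A) '' Q) := by
    rw [aglMap_eq, Set.image_image]
    apply Set.image_congr
    intro x _
    exact add_comm _ _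
  rw [h1]
  exact (hQ.linear_image (L A)).translate c

/-- the main compactness lemma: if the orbit distance vanishes, the bodies are in
the same orbit. -/
theorem inOrbit_of_deltaVOrbit_nonpos {P Q : Set (Euc n)} (hP : IsProperBody P)
    (hQ : IsProperBody Q) (h0 : deltaVOrbit P Q ≤ 0) : inOrbit P Q := by
  obtain ⟨hPne, hPc, hPconv, hPint⟩ := hP
  obtain ⟨hQne, hQc, hQconv, hQint⟩ := hQ
  -- bounding ball for P
  obtain ⟨D0, hD0⟩ := hPc.isBounded.subset_closedBall (0 : Euc n)
  set D : ℝ := max D0 1 with hDdef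
  have hD : 0 < D := lt_of_lt_of_le one_pos (le_max_right _ _)
  have hPD : P ⊆ Metric.closedBall 0 D :=
    hD0.trans (Metric.closedBall_subset_closedBall (le_max_left _ _))
  -- small ball inside Q
  obtain ⟨q0, hq0⟩ := hQint
  obtain ⟨r, hr, hball⟩ := Metric.isOpen_iff.mp isOpen_interior q0 hq0
  have hballQ : Metric.ball q0 r ⊆ Q := hball.trans interior_subset
  have hq0Q : q0 ∈ Q := interior_subset hq0
  -- volume facts
  have hQvolpos : 0 < volume Q := MeasureTheory.Measure.measure_pos_of_nonempty_interior volume ⟨q0, hq0⟩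
  have hQvoltop : volume Q ≠ ⊤ := hQc.measure_lt_top.ne
  set vQ : ℝ := (volume Q).toReal with hvQdef
  have hvQpos : 0 < vQ := ENNReal.toReal_pos hQvolpos.ne' hQvoltop
  set ε₀ : ℝ := (4 : ℝ)⁻¹ ^ n * (vQ / 2) with hε₀def
  have hε₀ : 0 < ε₀ := by positivity
  have hε₀le : ε₀ ≤ vQ / 2 := by
    have h4 : (4 : ℝ)⁻¹ ^ n ≤ 1 := pow_le_one₀ (by norm_num) (by norm_num)
    nlinarith
  have hsInf : deltaVOrbit P Q = 0 := le_antisymm h0 (deltaVOrbit_nonneg P Q)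
  -- approximating sequence
  have key : ∀ k : ℕ, ∃ (A : Matrix (Fin n) (Fin n) ℤ) (c : Euc n), IsAGLZ A ∧
      deltaV P (aglMap A c '' Q) < min ε₀ (1 / (k + 1)) := by
    intro k
    have hεk : 0 < min ε₀ (1 / ((k : ℝ) + 1)) := lt_min hε₀ (by positivity)
    obtain ⟨d, hd, hlt⟩ := Real.lt_sInf_add_pos (orbSet_nonempty P Q) hεk
    rw [← deltaVOrbit_eq, hsInf, zero_add] at hlt
    obtain ⟨Q'', hQ'', rfl⟩ := orbSet_reduce hd
    obtain ⟨A, c, hA, rfl⟩ := hQ''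
    exact ⟨A, c, hA, hlt⟩
  choose A c hA hlt using key
  set K : ℕ → Set (Euc n) := fun k => aglMap (A k) (c k) '' Q with hKdef
  have hKconv : ∀ k, Convex ℝ (K k) := fun k => aglMap_image_convex _ _ hQconv
  have hKcompact : ∀ k, IsCompact (K k) := fun k => hQc.image (aglMap_continuous _ _)
  have hKvol : ∀ k, volume (K k) = volume Q := fun k => vol_aglMap_image (hA k) _ _
  have hKtop : ∀ k, volume (K k) ≠ ⊤ := fun k => (hKvol k).symm ▸ hQvoltop
  -- the `K k \ P` are small
  have hKP : ∀ k, (volume (K k \ P)).toReal < min ε₀ (1 / (k + 1)) := by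
    intro k
    have h1 : (volume (K k \ P)).toReal ≤ deltaV P (K k) :=
      le_add_of_nonneg_left ENNReal.toReal_nonneg
    exact lt_of_le_of_lt h1 (hlt k)
  have hKPe : ∀ k, (volume (K k \ P)).toReal < ε₀ :=
    fun k => lt_of_lt_of_le (hKP k) (min_le_left _ _)
  -- volume of intersection is at least vQ/2
  have hKint : ∀ k, vQ / 2 ≤ (volume (K k ∩ P)).toReal := by
    intro k
    have hsplit : volume (K k) ≤ volume (K k ∩ P) + volume (K k \ P) := by
      calc volume (K k) = volume ((K k ∩ P) ∪ (K k \ P)) := by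
            rw [Set.inter_union_diff]
        _ ≤ _ := measure_union_le _ _
    have h1 : volume (K k ∩ P) ≠ ⊤ :=
      ne_top_of_le_ne_top (hKtop k) (measure_mono Set.inter_subset_left)
    have h2 : volume (K k \ P) ≠ ⊤ :=
      ne_top_of_le_ne_top (hKtop k) (measure_mono Set.diff_subset)
    have h3 : vQ ≤ (volume (K k ∩ P)).toReal + (volume (K k \ P)).toReal := by
      have := ENNReal.toReal_mono (by simp [ENNReal.add_ne_top, h1, h2]) hsplit
      rwa [hKvol k, ENNReal.toReal_add h1 h2] at this
    have h4 := hKPe k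
    linarith
  -- the bodies stay in a fixed ball
  have hKball : ∀ k, K k ⊆ Metric.closedBall 0 (2 * D) := by
    intro k
    apply subset_ball_of_small hD hPD (hKconv k) (hKtop k)
    calc (volume (K k \ P)).toReal < ε₀ := hKPe k
      _ = (4 : ℝ)⁻¹ ^ n * (vQ / 2) := rfl
      _ ≤ (4 : ℝ)⁻¹ ^ n * (volume (K k ∩ P)).toReal := by
          apply mul_le_mul_of_nonneg_left (hKint k) (by positivity)
  -- bound the matrix entries
  set N : ℤ := ⌈8 * D / r⌉ with hNdef
  have hAN : ∀ k i j, A k i j ∈ Finset.Icc (-N) N := by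
    intro k i j
    have h1 : |((A k i j : ℤ) : ℝ)| ≤ 8 * D / r :=
      entry_bound hr hballQ (hKball k) i j
    have h2 : |A k i j| ≤ N := by
      have : ((|A k i j| : ℤ) : ℝ) ≤ (N : ℝ) := by
        rw [Int.cast_abs]
        exact h1.trans (Int.le_ceil _)
      exact_mod_cast this
    rw [Finset.mem_Icc]
    exact abs_le.mp h2
  -- pigeonhole on matrices
  set f : ℕ → (Fin n → Fin n → {z : ℤ // z ∈ Finset.Icc (-N) N}) :=
    fun k i j => ⟨A k i j, hAN k i j⟩ with hfdef
  obtain ⟨y, hy⟩ := Finite.exists_infinite_fiber f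
  set A₀ : Matrix (Fin n) (Fin n) ℤ := Matrix.of (fun i j => (y i j : ℤ)) with hA₀def
  have hfib : ∀ k, f k = y → A k = A₀ := by
    intro k hk
    ext i j
    have := congrFun (congrFun hk i) j
    exact congrArg Subtype.val this
  have hinf : {k | f k = y}.Infinite := by
    have : f ⁻¹' {y} = {k | f k = y} := by
      ext k; simp [Set.preimage, Set.mem_singleton_iff]
    rw [← this, ← Set.infinite_coe_iff]
    exact hy
  have hg : ∀ m : ℕ, ∃ k, f k = y ∧ m < k := by
    intro m
    obtain ⟨b, hb, hmb⟩ := hinf.exists_gt m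
    exact ⟨b, hb, hmb⟩
  choose g hgf hgm using hg
  have hAg : ∀ m, A (g m) = A₀ := fun m => hfib _ (hgf m)
  -- the translations stay in a compact set
  have hcball : ∀ m, c (g m) ∈ Metric.closedBall (-(L A₀ q0)) (2 * D) := by
    intro m
    have h1 : aglMap (A (g m)) (c (g m)) q0 ∈ K (g m) := Set.mem_image_of_mem _ hq0Q
    have h2 := hKball (g m) h1
    rw [Metric.mem_closedBall, dist_zero_right, aglMap_eq] at h2
    rw [Metric.mem_closedBall, dist_eq_norm, sub_neg_eq_add]
    rw [hAg m] at h2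
    calc ‖c (g m) + L A₀ q0‖ = ‖L A₀ q0 + c (g m)‖ := by rw [add_comm]
      _ ≤ 2 * D := h2
  obtain ⟨cinf, _, φ, hφ, hconv⟩ :=
    (isCompact_closedBall (-(L A₀ q0)) (2 * D)).tendsto_subseq hcball
  have hA₀agl : IsAGLZ A₀ := by
    have := hA (g 0); rwa [hAg 0] at this
  set Kinf : Set (Euc n) := aglMap A₀ cinf '' Q with hKinfdef
  -- translation description of the approximants
  have htrans : ∀ c' : Euc n, aglMap A₀ c' '' Q = (fun y => y + (c' - cinf)) '' Kinf := by
    intro c'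
    rw [hKinfdef, Set.image_image]
    apply Set.image_congr
    intro x _
    simp only [aglMap_eq]
    abel
  have hKinfcompact : IsCompact Kinf := hQc.image (aglMap_continuous _ _)
  have hKinfconv : Convex ℝ Kinf := aglMap_image_convex _ _ hQconv
  -- homeomorphism, interior nonempty
  obtain ⟨B, c', hB, hleft, hright⟩ := exists_agl_inverse hA₀agl cinf
  set e : Homeomorph (Euc n) (Euc n) :=
    { toFun := aglMap A₀ cinf, invFun := aglMap B c', left_inv := hleft, right_inv := hright,
      continuous_toFun := aglMap_continuous _ _, continuous_invFun := aglMap_continuous _ _ }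
    with hedef
  have hKinfint : (interior Kinf).Nonempty := by
    have h1 : (e : Euc n → Euc n) '' interior Q = interior ((e : Euc n → Euc n) '' Q) :=
      Homeomorph.image_interior e Q
    have h2 : (e : Euc n → Euc n) '' Q = Kinf := rfl
    rw [h2] at h1
    exact ⟨e q0, h1 ▸ Set.mem_image_of_mem _ hq0⟩
  -- the subsequence bound
  have hδ : ∀ m : ℕ, deltaV P (aglMap A₀ (c (g (φ m))) '' Q) < 1 / ((m : ℝ) + 1) := by
    intro m
    have h1 := hlt (g (φ m))
    rw [hAg (φ m)] at h1
    have h2 : min ε₀ (1 / ((g (φ m) : ℝ) + 1)) ≤ 1 / ((g (φ m) : ℝ) + 1) := min_le_right _ _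
    have h3 : ((m : ℝ) + 1) ≤ ((g (φ m) : ℝ) + 1) := by
      have hm1 : m ≤ φ m := hφ.le_apply
      have hm2 : φ m < g (φ m) := hgm (φ m)
      have : (m : ℝ) ≤ (g (φ m) : ℝ) := by exact_mod_cast (hm1.trans hm2.le)
      linarith
    have h4 : 1 / ((g (φ m) : ℝ) + 1) ≤ 1 / ((m : ℝ) + 1) :=
      one_div_le_one_div_of_le (by positivity) h3
    exact lt_of_lt_of_le h1 (h2.trans h4)
  -- Claim 1 : interior Kinf ⊆ P
  have hsub1 : interior Kinf ⊆ P := by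
    intro x hx
    by_contra hxP
    obtain ⟨δ1, hδ1, hball1⟩ := Metric.isOpen_iff.mp hPc.isClosed.isOpen_compl x hxP
    obtain ⟨δ2, hδ2, hball2⟩ := Metric.isOpen_iff.mp isOpen_interior x hx
    set δ : ℝ := min δ1 δ2 with hδdef
    have hδpos : 0 < δ := lt_min hδ1 hδ2
    set vb : ℝ := (volume (Metric.ball x (δ/2))).toReal with hvbdef
    have hvb : 0 < vb := ENNReal.toReal_pos
      (measure_ball_pos _ _ (by positivity)).ne' measure_ball_lt_top.ne
    -- choose m with both smallness conditions
    have h1 : Filter.Tendsto (fun m : ℕ => 1 / ((m : ℝ) + 1)) Filter.atTop (nhds 0) :=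
      tendsto_one_div_add_atTop_nhds_zero_nat
    have h2 : ∀ᶠ m : ℕ in Filter.atTop, 1 / ((m : ℝ) + 1) < vb :=
      h1.eventually_lt_const hvb
    have h3 : ∀ᶠ m : ℕ in Filter.atTop, dist (c (g (φ m))) cinf < δ / 2 :=
      (Metric.tendsto_atTop.mp hconv (δ/2) (by positivity)).imp (fun m h => h)
        |> fun ⟨M, hM⟩ => Filter.eventually_atTop.mpr ⟨M, hM⟩
    obtain ⟨m, hm1, hm2⟩ := (h2.and h3).exists
    set dm : Euc n := c (g (φ m)) - cinf with hdmdef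
    have hdm : ‖dm‖ < δ / 2 := by rw [hdmdef, ← dist_eq_norm]; exact hm2
    have hKm : aglMap A₀ (c (g (φ m))) '' Q = (fun y => y + dm) '' Kinf := htrans _
    have hballsub : Metric.ball x (δ/2) ⊆ (aglMap A₀ (c (g (φ m))) '' Q) \ P := by
      intro z hz
      rw [Metric.mem_ball] at hz
      constructor
      · rw [hKm]
        refine ⟨z - dm, ?_, sub_add_cancel z dm⟩
        apply interior_subset
        apply hball2
        rw [Metric.mem_ball]
        calc dist (z - dm) x ≤ dist (z - dm) z + dist z x := dist_triangle _ _ _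
          _ = ‖dm‖ + dist z x := by rw [dist_eq_norm, sub_sub_cancel_left, norm_neg]
          _ < δ/2 + δ/2 := by linarith
          _ = δ := by ring
          _ ≤ δ2 := min_le_right _ _
      · intro hzP
        have hzc : z ∈ Pᶜ := by
          apply hball1
          rw [Metric.mem_ball]
          calc dist z x < δ/2 := hz
            _ ≤ δ1 := by
              have := min_le_left δ1 δ2
              linarith
        exact hzc hzP
    have hKmfin : IsCompact (aglMap A₀ (c (g (φ m))) '' Q) :=
      hQc.image (aglMap_continuous A₀ (c (g (φ m))))
    have hKmtop : volume ((aglMap A₀ (c (g (φ m))) '' Q) \ P) ≠ ⊤ :=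
      ne_top_of_le_ne_top hKmfin.measure_lt_top.ne (measure_mono Set.diff_subset)
    have hmono : vb ≤ (volume ((aglMap A₀ (c (g (φ m))) '' Q) \ P)).toReal :=
      ENNReal.toReal_mono hKmtop (measure_mono hballsub)
    have hle : (volume ((aglMap A₀ (c (g (φ m))) '' Q) \ P)).toReal ≤
        deltaV P (aglMap A₀ (c (g (φ m))) '' Q) :=
      le_add_of_nonneg_left ENNReal.toReal_nonneg
    have := hδ m
    linarith
  -- Claim 2 : interior P ⊆ Kinf
  have hsub2 : interior P ⊆ Kinf := by
    intro x hx
    by_contra hxK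
    obtain ⟨δ1, hδ1, hball1⟩ := Metric.isOpen_iff.mp hKinfcompact.isClosed.isOpen_compl x hxK
    obtain ⟨δ2, hδ2, hball2⟩ := Metric.isOpen_iff.mp isOpen_interior x hx
    set δ : ℝ := min δ1 δ2 with hδdef
    have hδpos : 0 < δ := lt_min hδ1 hδ2
    set vb : ℝ := (volume (Metric.ball x (δ/2))).toReal with hvbdef
    have hvb : 0 < vb := ENNReal.toReal_pos
      (measure_ball_pos _ _ (by positivity)).ne' measure_ball_lt_top.ne
    have h1 : Filter.Tendsto (fun m : ℕ => 1 / ((m : ℝ) + 1)) Filter.atTop (nhds 0) :=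
      tendsto_one_div_add_atTop_nhds_zero_nat
    have h2 : ∀ᶠ m : ℕ in Filter.atTop, 1 / ((m : ℝ) + 1) < vb :=
      h1.eventually_lt_const hvb
    have h3 : ∀ᶠ m : ℕ in Filter.atTop, dist (c (g (φ m))) cinf < δ / 2 :=
      (Metric.tendsto_atTop.mp hconv (δ/2) (by positivity)).imp (fun m h => h)
        |> fun ⟨M, hM⟩ => Filter.eventually_atTop.mpr ⟨M, hM⟩
    obtain ⟨m, hm1, hm2⟩ := (h2.and h3).exists
    set dm : Euc n := c (g (φ m)) - cinf with hdmdef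
    have hdm : ‖dm‖ < δ / 2 := by rw [hdmdef, ← dist_eq_norm]; exact hm2
    have hKm : aglMap A₀ (c (g (φ m))) '' Q = (fun y => y + dm) '' Kinf := htrans _
    have hballsub : Metric.ball x (δ/2) ⊆ P \ (aglMap A₀ (c (g (φ m))) '' Q) := by
      intro z hz
      rw [Metric.mem_ball] at hz
      constructor
      · apply interior_subset
        apply hball2
        rw [Metric.mem_ball]
        have := min_le_right δ1 δ2
        linarith
      · intro hzK
        rw [hKm] at hzK
        obtain ⟨w, hw, hwz⟩ := hzK
        have hwz' : w = z - dm := eq_sub_of_add_eq hwz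
        have : w ∈ Kinfᶜ := by
          apply hball1
          rw [Metric.mem_ball, hwz']
          calc dist (z - dm) x ≤ dist (z - dm) z + dist z x := dist_triangle _ _ _
            _ = ‖dm‖ + dist z x := by rw [dist_eq_norm, sub_sub_cancel_left, norm_neg]
            _ < δ/2 + δ/2 := by linarith
            _ = δ := by ring
            _ ≤ δ1 := min_le_left _ _
        exact this hw
    have hPdtop : volume (P \ (aglMap A₀ (c (g (φ m))) '' Q)) ≠ ⊤ :=
      ne_top_of_le_ne_top hPc.measure_lt_top.ne (measure_mono Set.diff_subset)
    have hmono : vb ≤ (volume (P \ (aglMap A₀ (c (g (φ m))) '' Q))).toReal :=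
      ENNReal.toReal_mono hPdtop (measure_mono hballsub)
    have hle : (volume (P \ (aglMap A₀ (c (g (φ m))) '' Q))).toReal ≤
        deltaV P (aglMap A₀ (c (g (φ m))) '' Q) :=
      le_add_of_nonneg_right ENNReal.toReal_nonneg
    have := hδ m
    linarith
  -- conclude : P = Kinf
  have hPK : P = Kinf := by
    apply subset_antisymm
    · calc P ⊆ closure (interior P) := subset_closure_interior hPconv hPint
        _ ⊆ closure Kinf := closure_mono hsub2
        _ = Kinf := hKinfcompact.isClosed.closure_eq
    · calc Kinf ⊆ closure (interior Kinf) := subset_closure_interior hKinfconv hKinfint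
        _ ⊆ closure P := closure_mono hsub1
        _ = P := hPc.isClosed.closure_eq
  exact inOrbit_symm ⟨A₀, cinf, hA₀agl, hPK⟩
end Delzant7

/-- `δ̃^V` is a metric on the set of `AGL(n,ℤ)`-orbits of proper convex
bodies: it is symmetric, satisfies the triangle inequality, vanishes on equal orbits, and is
strictly positive on distinct orbits. -/
theorem delzant_stmt_7 (n : ℕ) :
    (∀ P Q : Set (Euc n), IsProperBody P → IsProperBody Q →
      deltaVOrbit P Q = deltaVOrbit Q P) ∧
    (∀ P Q R : Set (Euc n), IsProperBody P → IsProperBody Q → IsProperBody R →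
      deltaVOrbit P R ≤ deltaVOrbit P Q + deltaVOrbit Q R) ∧
    (∀ P Q : Set (Euc n), IsProperBody P → IsProperBody Q →
      inOrbit P Q → deltaVOrbit P Q = 0) ∧
    (∀ P Q : Set (Euc n), IsProperBody P → IsProperBody Q →
      ¬ inOrbit P Q → 0 < deltaVOrbit P Q) := by
  
  refine ⟨?_, ?_, ?_, ?_⟩
  · intro P Q _ _
    exact Delzant7.deltaVOrbit_comm P Q
  · intro P Q R hP hQ hR
    exact Delzant7.deltaVOrbit_triangle hP.2.1 hQ.2.1 hR.2.1
  · intro P Q _ _ h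
    exact Delzant7.deltaVOrbit_zero_of_inOrbit h
  · intro P Q hP hQ hno
    by_contra h
    exact hno (Delzant7.inOrbit_of_deltaVOrbit_nonpos hP hQ (not_lt.mp h))
end
end

section
/- Let α₁,…,α_m ∈ (ℝⁿ)* be finitely many nonzero vectors whose nonnegative span is all of (ℝⁿ)*. For b ∈ ℝ^m let P(b) = {x ∈ ℝⁿ : ⟨α_i, x⟩ ≤ b_i for i = 1,…,m}. Then b equals the vector (h(α₁),…,h(α_m)) of values at the α_i of the support function h of some (necessarily bounded, possibly lower-dimensional or empty only if excluded) polytope P(b) — equivalently, P(b) is nonempty and b_j = max_{x ∈ P(b)} ⟨α_j, x⟩ for every j — if and only if b satisfies the following linear inequalities: (1) for every nonnegative linear dependence Σᵢ λᵢαᵢ = 0 with all λᵢ ≥ 0, one has Σᵢ λᵢbᵢ ≥ 0; and (2) for every nonnegative combination Σᵢ λᵢαᵢ = α_j with all λᵢ ≥ 0, one has Σᵢ λᵢbᵢ ≥ b_j. Moreover, it suffices to impose these inequalities for the (finitely many) dependences and combinations with minimal support. -/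
/- Common definitions: polytopes, faces, Delzant polytopes, normal fans,
   the symmetric-difference and Hausdorff metrics, and the AGL(n,ℤ) action. -/

open Set MeasureTheory Metric
open scoped Pointwise

noncomputable section

/-- The polyhedron `P(b) = {x : ⟨α i, x⟩ ≤ b i for all i}`. -/
def polyOf {n m : ℕ} (α : Fin m → Euc n) (b : Fin m → ℝ) : Set (Euc n) :=
  {x | ∀ i, dotE (α i) x ≤ b i}

/-- `lam` is a nonnegative linear dependence among the `α i` with minimal support. -/
def MinimalDep {n m : ℕ} (α : Fin m → Euc n) (lam : Fin m → ℝ) : Prop :=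
  (∀ i, 0 ≤ lam i) ∧ (∑ i, lam i • α i) = 0 ∧ lam ≠ 0 ∧
  ∀ mu : Fin m → ℝ, (∀ i, 0 ≤ mu i) → (∑ i, mu i • α i) = 0 → mu ≠ 0 →
    Function.support mu ⊆ Function.support lam →
    Function.support mu = Function.support lam

/-- `lam` is a nonnegative combination expressing `α j` with minimal support. -/
def MinimalComb {n m : ℕ} (α : Fin m → Euc n) (j : Fin m) (lam : Fin m → ℝ) : Prop :=
  (∀ i, 0 ≤ lam i) ∧ (∑ i, lam i • α i) = α j ∧
  ∀ mu : Fin m → ℝ, (∀ i, 0 ≤ mu i) → (∑ i, mu i • α i) = α j →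
    Function.support mu ⊆ Function.support lam →
    Function.support mu = Function.support lam

namespace FarkasAux

variable {H : Type*} [NormedAddCommGroup H] [InnerProductSpace ℝ H] [FiniteDimensional ℝ H]

/-- no nontrivial dependence supported in `s`. -/
def IndepOn {k : ℕ} (v : Fin k → H) (s : Finset (Fin k)) : Prop :=
  ∀ c : Fin k → ℝ, (∀ i ∉ s, c i = 0) → (∑ i, c i • v i) = 0 → ∀ i, c i = 0

lemma isClosed_coneOn {k : ℕ} (v : Fin k → H) (s : Finset (Fin k)) (hs : IndepOn v s) :
    IsClosed {x : H | ∃ l : Fin k → ℝ, (∀ i, 0 ≤ l i) ∧ (∀ i ∉ s, l i = 0) ∧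
      x = ∑ i, l i • v i} := by
  classical
  set T : ((↥s) → ℝ) →ₗ[ℝ] H :=
    { toFun := fun l => ∑ i : ↥s, l i • v ↑i
      map_add' := by intro a b; simp [add_smul, Finset.sum_add_distrib]
      map_smul' := by intro a b; simp [smul_smul, Finset.smul_sum] } with hT
  have key : ∀ l : (↥s) → ℝ, (∑ i : ↥s, l i • v ↑i)
      = ∑ i, (fun i => if h : i ∈ s then l ⟨i, h⟩ else 0) i • v i := by
    intro l
    rw [show (∑ i : ↥s, l i • v ↑i) = ∑ i : ↥s,
        (fun j => if h : j ∈ s then l ⟨j, h⟩ else 0) ↑i • v ↑i from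
      Finset.sum_congr rfl (by intro i _; simp), Finset.sum_coe_sort s
        (fun j => (fun j => if h : j ∈ s then l ⟨j, h⟩ else 0) j • v j)]
    exact Finset.sum_subset (Finset.subset_univ s) (by intro i _ hi; simp [hi])
  have hinj : LinearMap.ker T = ⊥ := by
    rw [LinearMap.ker_eq_bot']
    intro l hl
    have h0 : (∑ i, (fun i => if h : i ∈ s then l ⟨i, h⟩ else 0) i • v i) = 0 := by
      rw [← key l]; exact hl
    have := hs _ (fun i hi => dif_neg hi) h0
    funext i
    have := this ↑i
    simpa using this
  have hemb := LinearMap.isClosedEmbedding_of_injective (f := T) hinj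
  have heq : {x : H | ∃ l : Fin k → ℝ, (∀ i, 0 ≤ l i) ∧ (∀ i ∉ s, l i = 0) ∧
      x = ∑ i, l i • v i} = T '' {l : (↥s) → ℝ | ∀ i, 0 ≤ l i} := by
    ext x
    constructor
    · rintro ⟨l, hl0, hls, rfl⟩
      refine ⟨fun i => l ↑i, fun i => hl0 _, ?_⟩
      show (∑ i : ↥s, l ↑i • v ↑i) = _
      rw [key]
      refine Finset.sum_congr rfl ?_
      intro i _
      by_cases h : i ∈ s <;> simp [h, hls i]
    · rintro ⟨l, hl0, rfl⟩
      refine ⟨fun i => if h : i ∈ s then l ⟨i, h⟩ else 0, ?_, ?_, ?_⟩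
      · intro i; by_cases h : i ∈ s <;> simp [h]; exact hl0 _
      · intro i hi; simp [hi]
      · exact key l
  rw [heq]
  refine hemb.isClosedMap _ ?_
  have : {l : (↥s) → ℝ | ∀ i, 0 ≤ l i} = ⋂ i, {l : (↥s) → ℝ | 0 ≤ l i} := by
    ext; simp [Set.mem_iInter]
  rw [this]
  exact isClosed_iInter fun i => isClosed_le continuous_const (continuous_apply i)


lemma caratheodory {k : ℕ} (v : Fin k → H) :
    ∀ (N : ℕ) (l : Fin k → ℝ), (Finset.univ.filter (fun i => l i ≠ 0)).card ≤ N →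
    (∀ i, 0 ≤ l i) →
    ∃ (s : Finset (Fin k)) (l' : Fin k → ℝ), IndepOn v s ∧ (∀ i, 0 ≤ l' i) ∧
      (∀ i ∉ s, l' i = 0) ∧ (∑ i, l' i • v i) = ∑ i, l i • v i := by
  classical
  intro N
  induction N with
  | zero =>
    intro l hcard _
    have hl : ∀ i, l i = 0 := by
      intro i
      by_contra hi
      have : i ∈ Finset.univ.filter (fun i => l i ≠ 0) := by simp [hi]
      have := Finset.card_pos.mpr ⟨i, this⟩
      omega
    refine ⟨∅, l, ?_, fun i => le_of_eq (hl i).symm, fun i _ => hl i, rfl⟩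
    intro c hc _ i
    exact hc i (by simp)
  | succ N ih =>
    intro l hcard hl0
    by_cases hind : IndepOn v (Finset.univ.filter (fun i => l i ≠ 0))
    · exact ⟨_, l, hind, hl0, fun i hi => by simpa using hi, rfl⟩
    · -- extract a dependence c supported on supp l, with some positive coordinate
      rw [IndepOn] at hind
      push_neg at hind
      obtain ⟨c, hcsupp, hcdep, i₀, hi₀⟩ := hind
      have hcsupp' : ∀ i, l i = 0 → c i = 0 := by
        intro i hi
        exact hcsupp i (by simp [hi])
      -- WLOG some coordinate of c is positive
      obtain ⟨c, hcsupp', hcdep, hpos⟩ :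
          ∃ c : Fin k → ℝ, (∀ i, l i = 0 → c i = 0) ∧ (∑ i, c i • v i) = 0 ∧
            ∃ i, 0 < c i := by
        rcases lt_trichotomy (c i₀) 0 with h | h | h
        · refine ⟨-c, fun i hi => by simp [hcsupp' i hi], ?_, ⟨i₀, by simpa using h⟩⟩
          simp only [Pi.neg_apply, neg_smul, Finset.sum_neg_distrib, hcdep, neg_zero]
        · exact absurd h hi₀
        · exact ⟨c, hcsupp', hcdep, ⟨i₀, h⟩⟩
      obtain ⟨iP, hiP⟩ := hpos
      set P : Finset (Fin k) := Finset.univ.filter (fun i => 0 < c i) with hP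
      have hPne : P.Nonempty := ⟨iP, by simp [hP, hiP]⟩
      set t : ℝ := P.inf' hPne (fun i => l i / c i) with ht
      obtain ⟨is, hisP, hist⟩ := Finset.exists_mem_eq_inf' hPne (fun i => l i / c i)
      have hcis : 0 < c is := by simpa [hP] using hisP
      have hlis : l is ≠ 0 := by
        intro h
        exact absurd (hcsupp' is h) (ne_of_gt hcis)
      have ht0 : 0 ≤ t := by
        rw [ht, hist]
        exact div_nonneg (hl0 is) hcis.le
      set l' : Fin k → ℝ := fun i => l i - t * c i with hl'
      have hl'0 : ∀ i, 0 ≤ l' i := by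
        intro i
        by_cases h : 0 < c i
        · have : t ≤ l i / c i := Finset.inf'_le _ (by simp [hP, h])
          have := (le_div_iff₀ h).mp this
          simp only [hl']; linarith
        · push_neg at h
          have : t * c i ≤ 0 := mul_nonpos_of_nonneg_of_nonpos ht0 h
          simp only [hl']; linarith [hl0 i]
      have hl'dep : (∑ i, l' i • v i) = ∑ i, l i • v i := by
        simp only [hl', sub_smul, smul_smul, Finset.sum_sub_distrib]
        rw [show (∑ i, (t * c i) • v i) = t • ∑ i, c i • v i by
          rw [Finset.smul_sum]; exact Finset.sum_congr rfl fun i _ => (smul_smul t (c i) (v i)).symm]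
        rw [hcdep, smul_zero, sub_zero]
      have hsubset : (Finset.univ.filter (fun i => l' i ≠ 0)) ⊂ (Finset.univ.filter (fun i => l i ≠ 0)) := by
        refine Finset.ssubset_iff_of_subset ?_ |>.mpr ⟨is, by simp [hlis], ?_⟩
        · intro i hi
          simp only [Finset.mem_filter, Finset.mem_univ, true_and] at hi ⊢
          intro h
          exact hi (by simp [hl', h, hcsupp' i h])
        · have hteq : t = l is / c is := by rw [ht, hist]
          have : l' is = 0 := by
            simp only [hl', hteq]
            field_simp
            ring
          simp [this]
      have hcard' : (Finset.univ.filter (fun i => l' i ≠ 0)).card ≤ N := by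
        have := Finset.card_lt_card hsubset
        omega
      obtain ⟨s, l'', h1, h2, h3, h4⟩ := ih l' hcard' hl'0
      exact ⟨s, l'', h1, h2, h3, h4.trans hl'dep⟩


lemma isClosed_cone {k : ℕ} (v : Fin k → H) :
    IsClosed {x : H | ∃ l : Fin k → ℝ, (∀ i, 0 ≤ l i) ∧ x = ∑ i, l i • v i} := by
  classical
  have heq : {x : H | ∃ l : Fin k → ℝ, (∀ i, 0 ≤ l i) ∧ x = ∑ i, l i • v i}
      = ⋃ s ∈ {s : Finset (Fin k) | IndepOn v s},
          {x : H | ∃ l : Fin k → ℝ, (∀ i, 0 ≤ l i) ∧ (∀ i ∉ s, l i = 0) ∧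
            x = ∑ i, l i • v i} := by
    ext x
    simp only [Set.mem_setOf_eq, Set.mem_iUnion, exists_prop]
    constructor
    · rintro ⟨l, hl0, rfl⟩
      obtain ⟨s, l', h1, h2, h3, h4⟩ := caratheodory v _ l le_rfl hl0
      exact ⟨s, h1, l', h2, h3, h4.symm⟩
    · rintro ⟨s, _, l, hl0, _, rfl⟩
      exact ⟨l, hl0, rfl⟩
  rw [heq]
  exact (Set.toFinite _).isClosed_biUnion fun s hs => isClosed_coneOn v s hs

open scoped InnerProductSpace in
lemma farkas {k : ℕ} (v : Fin k → H) (c : Fin k → ℝ)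
    (h : ∀ l : Fin k → ℝ, (∀ i, 0 ≤ l i) → (∑ i, l i • v i) = 0 →
      0 ≤ ∑ i, l i * c i) :
    ∃ x : H, ∀ i, ⟪v i, x⟫_ℝ ≤ c i := by
  classical
  set H' := WithLp 2 (H × ℝ) with hH'
  set e := (WithLp.linearEquiv 2 ℝ (H × ℝ)) with he
  set w : Fin (k + 1) → H' := fun i =>
    if h : (i : ℕ) < k then e.symm (v ⟨i, h⟩, c ⟨i, h⟩) else e.symm (0, 1) with hw
  set K : ConvexCone ℝ H' :=
    { carrier := {x : H' | ∃ l : Fin (k+1) → ℝ, (∀ i, 0 ≤ l i) ∧ x = ∑ i, l i • w i}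
      smul_mem' := by
        rintro a ha x ⟨l, hl0, rfl⟩
        refine ⟨fun i => a * l i, fun i => mul_nonneg ha.le (hl0 i), ?_⟩
        rw [Finset.smul_sum]
        exact Finset.sum_congr rfl fun i _ => by simp [smul_smul]
      add_mem' := by
        rintro x ⟨l, hl0, rfl⟩ y ⟨l', hl'0, rfl⟩
        refine ⟨fun i => l i + l' i, fun i => add_nonneg (hl0 i) (hl'0 i), ?_⟩
        rw [← Finset.sum_add_distrib]
        exact Finset.sum_congr rfl fun i _ => by simp [add_smul] } with hK
  have hKne : (K : Set H').Nonempty := ⟨0, ⟨fun _ => 0, fun _ => le_rfl, by simp⟩⟩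
  have hKcl : IsClosed (K : Set H') := isClosed_cone w
  -- components of elements of the cone
  have hcomp : ∀ l : Fin (k+1) → ℝ,
      e (∑ i, l i • w i) = (∑ i, l i • (e (w i)).1, ∑ i, l i * (e (w i)).2) := by
    intro l
    rw [map_sum]
    rw [show (∑ i, e (l i • w i)) = ∑ i, l i • e (w i) from
      Finset.sum_congr rfl fun i _ => e.map_smul _ _]
    refine Prod.ext ?_ ?_
    · rw [Prod.fst_sum]
      exact Finset.sum_congr rfl fun i _ => rfl
    · rw [Prod.snd_sum]
      exact Finset.sum_congr rfl fun i _ => rfl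
  have hewfst : ∀ i : Fin k, (e (w i.castSucc)).1 = v i ∧ (e (w i.castSucc)).2 = c i := by
    intro i
    have hlt : ((i.castSucc : Fin (k+1)) : ℕ) < k := i.isLt
    simp only [hw, dif_pos hlt]
    constructor <;> simp [he]
  have hewlast : (e (w (Fin.last k))).1 = 0 ∧ (e (w (Fin.last k))).2 = 1 := by
    simp only [hw, Fin.val_last, lt_irrefl, dif_neg (lt_irrefl k)]
    constructor <;> simp [he]
  have hbK : e.symm (0, -1) ∉ K := by
    rintro ⟨l, hl0, hsum⟩
    have := hcomp l
    rw [← hsum] at this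
    simp only [LinearEquiv.apply_symm_apply] at this
    have h1 : (∑ i, l i • (e (w i)).1) = 0 := (congrArg Prod.fst this).symm
    have h2 : (∑ i, l i * (e (w i)).2) = -1 := (congrArg Prod.snd this).symm
    rw [Fin.sum_univ_castSucc] at h1 h2
    rw [(hewlast).1, smul_zero, add_zero] at h1
    rw [(hewlast).2, mul_one] at h2
    have h1' : (∑ i : Fin k, l i.castSucc • v i) = 0 := by
      rw [← h1]; exact Finset.sum_congr rfl fun i _ => by rw [(hewfst i).1]
    have h2' : (∑ i : Fin k, l i.castSucc * c i) + l (Fin.last k) = -1 := by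
      rw [← h2]
      congr 1
      exact Finset.sum_congr rfl fun i _ => by rw [(hewfst i).2]
    have := h (fun i => l i.castSucc) (fun i => hl0 _) h1'
    have hlast := hl0 (Fin.last k)
    linarith
  obtain ⟨y, hy1, hy2⟩ : ∃ y, (∀ x ∈ K, 0 ≤ ⟪x, y⟫_ℝ) ∧ ⟪y, e.symm (0, -1)⟫_ℝ < 0 := by
    obtain ⟨y, hy1, hy2⟩ := ProperCone.hyperplane_separation' (C := ({
        carrier := (K : Set H')
        zero_mem' := ⟨fun _ => 0, fun _ => le_rfl, by simp⟩
        add_mem' := fun ha hb => K.add_mem ha hb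
        smul_mem' := by
          rintro c x ⟨l, hl0, rfl⟩
          refine ⟨fun i => (c : ℝ) * l i, fun i => mul_nonneg c.2 (hl0 i), ?_⟩
          rw [Finset.smul_sum]
          exact Finset.sum_congr rfl fun i _ => by rw [mul_smul]; rfl
        isClosed' := hKcl } : ProperCone ℝ H')) hbK
    exact ⟨y, hy1, by rwa [real_inner_comm]⟩
  -- inner products
  have hinner : ∀ z : H', ⟪z, y⟫_ℝ = ⟪(e z).1, (e y).1⟫_ℝ + (e z).2 * (e y).2 := by
    intro z
    rw [WithLp.prod_inner_apply]
    congr 1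
    simp [he, mul_comm]
  have hy2' : 0 < (e y).2 := by
    have := hy2
    rw [real_inner_comm, hinner] at this
    simp only [LinearEquiv.apply_symm_apply] at this
    simp only [inner_zero_left, zero_add, neg_one_mul] at this
    linarith
  have hwiK : ∀ i : Fin (k+1), w i ∈ K := by
    intro i
    refine ⟨fun j => if j = i then 1 else 0, fun j => by positivity, ?_⟩
    rw [Finset.sum_eq_single i (fun j _ hj => by simp [hj]) (by simp)]
    simp
  refine ⟨(-(e y).2⁻¹) • (e y).1, ?_⟩
  intro i
  have h0 := hy1 _ (hwiK i.castSucc)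
  rw [hinner, (hewfst i).1, (hewfst i).2] at h0
  rw [real_inner_smul_right]
  have h1 : 0 ≤ (e y).2⁻¹ * (⟪v i, (e y).1⟫_ℝ + c i * (e y).2) :=
    mul_nonneg (inv_nonneg.mpr hy2'.le) h0
  have h2 : (e y).2⁻¹ * ((e y).2) = 1 := inv_mul_cancel₀ hy2'.ne'
  have h3 : 0 ≤ (e y).2⁻¹ * ⟪v i, (e y).1⟫_ℝ + c i := by
    rw [mul_add, show (e y).2⁻¹ * (c i * (e y).2) = c i * ((e y).2⁻¹ * (e y).2) by ring, h2,
      mul_one] at h1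
    exact h1
  linarith

end FarkasAux

section DelzantAux

lemma support_ssub {m : ℕ} {f g : Fin m → ℝ}
    (hsub : Function.support f ⊆ Function.support g)
    (hne : Function.support f ≠ Function.support g) :
    (Finset.univ.filter (fun i => f i ≠ 0)) ⊂ (Finset.univ.filter (fun i => g i ≠ 0)) := by
  classical
  constructor
  · intro i hi
    simp only [Finset.mem_filter, Finset.mem_univ, true_and] at hi ⊢
    exact hsub hi
  · intro hcon
    apply hne
    ext i
    have h1 : i ∈ Finset.univ.filter (fun i => g i ≠ 0) → i ∈ Finset.univ.filter (fun i => f i ≠ 0) := @hcon i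
    simp only [Finset.mem_filter, Finset.mem_univ, true_and] at h1
    simp only [Function.mem_support]
    exact ⟨fun h => hsub h, h1⟩

lemma dep_reduce {n m : ℕ} (α : Fin m → Euc n) (b : Fin m → ℝ)
    (hmin : ∀ lam, MinimalDep α lam → 0 ≤ ∑ i, lam i * b i) :
    ∀ (N : ℕ) (lam : Fin m → ℝ), (Finset.univ.filter (fun i => lam i ≠ 0)).card ≤ N →
      (∀ i, 0 ≤ lam i) → (∑ i, lam i • α i) = 0 → 0 ≤ ∑ i, lam i * b i := by
  classical
  intro N
  induction N with
  | zero =>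
    intro lam hcard _ _
    have : ∀ i, lam i = 0 := by
      intro i
      by_contra hi
      have hmem : i ∈ Finset.univ.filter (fun i => lam i ≠ 0) := by simp [hi]
      have := Finset.card_pos.mpr ⟨i, hmem⟩
      omega
    simp [this]
  | succ N ih =>
    intro lam hcard hl0 hdep
    by_cases hz : lam = 0
    · simp [hz]
    by_cases hm : MinimalDep α lam
    · exact hmin lam hm
    · have hnm : ¬ (∀ mu : Fin m → ℝ, (∀ i, 0 ≤ mu i) → (∑ i, mu i • α i) = 0 → mu ≠ 0 →
          Function.support mu ⊆ Function.support lam →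
          Function.support mu = Function.support lam) := by
        intro hmm
        exact hm ⟨hl0, hdep, hz, hmm⟩
      push_neg at hnm
      obtain ⟨mu, hmu0, hmudep, hmuz, hmusub, hmune⟩ := hnm
      have hssub := support_ssub hmusub hmune
      have hsub' : ∀ i, lam i = 0 → mu i = 0 := by
        intro i hi
        by_contra h
        exact (hmusub h) hi
      obtain ⟨iP, hiP⟩ : ∃ i, 0 < mu i := by
        by_contra h
        push_neg at h
        exact hmuz (funext fun i => le_antisymm (h i) (hmu0 i))
      set P : Finset (Fin m) := Finset.univ.filter (fun i => 0 < mu i) with hP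
      have hPne : P.Nonempty := ⟨iP, by simp [hP, hiP]⟩
      set t : ℝ := P.inf' hPne (fun i => lam i / mu i) with ht
      obtain ⟨is, hisP, hist⟩ := Finset.exists_mem_eq_inf' hPne (fun i => lam i / mu i)
      have hmuis : 0 < mu is := by simpa [hP] using hisP
      have hlamis : lam is ≠ 0 := by
        intro h
        exact absurd (hsub' is h) (ne_of_gt hmuis)
      have ht0 : 0 ≤ t := by
        rw [ht, hist]
        exact div_nonneg (hl0 is) hmuis.le
      set lam' : Fin m → ℝ := fun i => lam i - t * mu i with hlam'
      have hlam'0 : ∀ i, 0 ≤ lam' i := by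
        intro i
        by_cases h : 0 < mu i
        · have h1 : t ≤ lam i / mu i := Finset.inf'_le _ (by simp [hP, h])
          have := (le_div_iff₀ h).mp h1
          simp only [hlam']; linarith
        · push_neg at h
          have : t * mu i ≤ 0 := mul_nonpos_of_nonneg_of_nonpos ht0 h
          simp only [hlam']; linarith [hl0 i]
      have hlam'dep : (∑ i, lam' i • α i) = 0 := by
        have : (∑ i, lam' i • α i) = (∑ i, lam i • α i) - t • (∑ i, mu i • α i) := by
          rw [Finset.smul_sum, ← Finset.sum_sub_distrib]
          exact Finset.sum_congr rfl fun i _ => by simp only [hlam']; module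
        rw [this, hdep, hmudep, smul_zero, sub_zero]
      have hsubset : (Finset.univ.filter (fun i => lam' i ≠ 0)) ⊂ (Finset.univ.filter (fun i => lam i ≠ 0)) := by
        refine Finset.ssubset_iff_of_subset ?_ |>.mpr ⟨is, by simp [hlamis], ?_⟩
        · intro i hi
          simp only [Finset.mem_filter, Finset.mem_univ, true_and] at hi ⊢
          intro h
          exact hi (by simp [hlam', h, hsub' i h])
        · have hteq : t = lam is / mu is := by rw [ht, hist]
          have : lam' is = 0 := by
            simp only [hlam', hteq]
            field_simp
            ring
          simp [this]
      have hc1 : (Finset.univ.filter (fun i => lam' i ≠ 0)).card ≤ N := by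
        have := Finset.card_lt_card hsubset; omega
      have hc2 : (Finset.univ.filter (fun i => mu i ≠ 0)).card ≤ N := by
        have := Finset.card_lt_card hssub; omega
      have hA := ih lam' hc1 hlam'0 hlam'dep
      have hB := ih mu hc2 hmu0 hmudep
      have hsplit : (∑ i, lam i * b i) = (∑ i, lam' i * b i) + t * (∑ i, mu i * b i) := by
        rw [Finset.mul_sum, ← Finset.sum_add_distrib]
        exact Finset.sum_congr rfl fun i _ => by simp only [hlam']; ring
      rw [hsplit]
      have := mul_nonneg ht0 hB
      linarith

lemma comb_reduce {n m : ℕ} (α : Fin m → Euc n) (b : Fin m → ℝ)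
    (hdep : ∀ lam : Fin m → ℝ, (∀ i, 0 ≤ lam i) → (∑ i, lam i • α i) = 0 →
      0 ≤ ∑ i, lam i * b i)
    (hmin : ∀ (j : Fin m) (lam : Fin m → ℝ), MinimalComb α j lam → b j ≤ ∑ i, lam i * b i) :
    ∀ (N : ℕ) (j : Fin m) (lam : Fin m → ℝ), (Finset.univ.filter (fun i => lam i ≠ 0)).card ≤ N →
      (∀ i, 0 ≤ lam i) → (∑ i, lam i • α i) = α j → b j ≤ ∑ i, lam i * b i := by
  classical
  intro N
  induction N with
  | zero =>
    intro j lam hcard hl0 hcomb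
    by_cases hm : MinimalComb α j lam
    · exact hmin j lam hm
    · exfalso
      have hnm : ¬ (∀ mu : Fin m → ℝ, (∀ i, 0 ≤ mu i) → (∑ i, mu i • α i) = α j →
          Function.support mu ⊆ Function.support lam →
          Function.support mu = Function.support lam) := fun hmm => hm ⟨hl0, hcomb, hmm⟩
      push_neg at hnm
      obtain ⟨mu, _, _, hmusub, hmune⟩ := hnm
      have hssub := support_ssub hmusub hmune
      have : Finset.univ.filter (fun i => lam i ≠ 0) = ∅ :=
        Finset.card_eq_zero.mp (le_antisymm hcard (Nat.zero_le _))
      rw [this] at hssub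
      exact Finset.not_ssubset_empty _ hssub
  | succ N ih =>
    intro j lam hcard hl0 hcomb
    by_cases hm : MinimalComb α j lam
    · exact hmin j lam hm
    have hnm : ¬ (∀ mu : Fin m → ℝ, (∀ i, 0 ≤ mu i) → (∑ i, mu i • α i) = α j →
        Function.support mu ⊆ Function.support lam →
        Function.support mu = Function.support lam) := fun hmm => hm ⟨hl0, hcomb, hmm⟩
    push_neg at hnm
    obtain ⟨mu, hmu0, hmucomb, hmusub, hmune⟩ := hnm
    have hssub := support_ssub hmusub hmune
    have hsub' : ∀ i, lam i = 0 → mu i = 0 := by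
      intro i hi
      by_contra h
      exact (hmusub h) hi
    have hcmu : (Finset.univ.filter (fun i => mu i ≠ 0)).card ≤ N := by
      have h1 := Finset.card_lt_card hssub; omega
    have hBmu := ih j mu hcmu hmu0 hmucomb
    by_cases hle : ∀ i, mu i ≤ lam i
    · -- lam = mu + (lam - mu), the latter a nonneg dependence
      set nu : Fin m → ℝ := fun i => lam i - mu i with hnu
      have hnu0 : ∀ i, 0 ≤ nu i := fun i => by simp only [hnu]; linarith [hle i]
      have hnudep : (∑ i, nu i • α i) = 0 := by
        have : (∑ i, nu i • α i) = (∑ i, lam i • α i) - (∑ i, mu i • α i) := by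
          rw [← Finset.sum_sub_distrib]
          exact Finset.sum_congr rfl fun i _ => by simp only [hnu]; module
        rw [this, hcomb, hmucomb, sub_self]
      have hnub := hdep nu hnu0 hnudep
      have hsplit : (∑ i, lam i * b i) = (∑ i, mu i * b i) + (∑ i, nu i * b i) := by
        rw [← Finset.sum_add_distrib]
        exact Finset.sum_congr rfl fun i _ => by simp only [hnu]; ring
      rw [hsplit]
      linarith
    · push_neg at hle
      obtain ⟨iI, hiI⟩ := hle
      set I : Finset (Fin m) := Finset.univ.filter (fun i => lam i < mu i) with hI
      have hIne : I.Nonempty := ⟨iI, by simp [hI, hiI]⟩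
      set t : ℝ := I.inf' hIne (fun i => lam i / (mu i - lam i)) with ht
      obtain ⟨is, hisI, hist⟩ := Finset.exists_mem_eq_inf' hIne (fun i => lam i / (mu i - lam i))
      have hislt : lam is < mu is := by simpa [hI] using hisI
      have hmuis : mu is ≠ 0 := by
        intro h
        rw [h] at hislt
        linarith [hl0 is]
      have hlamis : lam is ≠ 0 := fun h => hmuis (hsub' is h)
      have ht0 : 0 ≤ t := by
        rw [ht, hist]
        exact div_nonneg (hl0 is) (by linarith)
      set lam' : Fin m → ℝ := fun i => lam i + t * (lam i - mu i) with hlam'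
      have hlam'0 : ∀ i, 0 ≤ lam' i := by
        intro i
        by_cases h : lam i < mu i
        · have h1 : t ≤ lam i / (mu i - lam i) := Finset.inf'_le _ (by simp [hI, h])
          have h2 : (0:ℝ) < mu i - lam i := by linarith
          have := (le_div_iff₀ h2).mp h1
          simp only [hlam']; nlinarith
        · push_neg at h
          have : 0 ≤ t * (lam i - mu i) := mul_nonneg ht0 (by linarith)
          simp only [hlam']; linarith [hl0 i]
      have hlam'comb : (∑ i, lam' i • α i) = α j := by
        have : (∑ i, lam' i • α i)
            = (1 + t) • (∑ i, lam i • α i) - t • (∑ i, mu i • α i) := by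
          rw [Finset.smul_sum, Finset.smul_sum, ← Finset.sum_sub_distrib]
          exact Finset.sum_congr rfl fun i _ => by simp only [hlam']; module
        rw [this, hcomb, hmucomb]
        module
      have hsubset : (Finset.univ.filter (fun i => lam' i ≠ 0)) ⊂ (Finset.univ.filter (fun i => lam i ≠ 0)) := by
        refine Finset.ssubset_iff_of_subset ?_ |>.mpr ⟨is, by simp [hlamis], ?_⟩
        · intro i hi
          simp only [Finset.mem_filter, Finset.mem_univ, true_and] at hi ⊢
          intro h
          exact hi (by simp [hlam', h, hsub' i h])
        · have hteq : t = lam is / (mu is - lam is) := by rw [ht, hist]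
          have hden : mu is - lam is ≠ 0 := by intro h; linarith
          have : lam' is = 0 := by
            simp only [hlam', hteq]
            field_simp
            ring
          simp [this]
      have hc1 : (Finset.univ.filter (fun i => lam' i ≠ 0)).card ≤ N := by
        have := Finset.card_lt_card hsubset; omega
      have hA := ih j lam' hc1 hlam'0 hlam'comb
      have hsplit : (1 + t) * (∑ i, lam i * b i) = (∑ i, lam' i * b i) + t * (∑ i, mu i * b i) := by
        rw [Finset.mul_sum, Finset.mul_sum, ← Finset.sum_add_distrib]
        exact Finset.sum_congr rfl fun i _ => by simp only [hlam']; ring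
      nlinarith [hA, hBmu, ht0]


end DelzantAux

section DotEAux

open scoped InnerProductSpace

lemma dotE_eq_inner {n : ℕ} (a x : Euc n) : dotE a x = ⟪a, x⟫_ℝ := by
  simp [dotE, PiLp.inner_apply, RCLike.inner_apply]
  exact Finset.sum_congr rfl fun i _ => mul_comm _ _

lemma dotE_sum_smul {n m : ℕ} (α : Fin m → Euc n) (lam : Fin m → ℝ) (x : Euc n) :
    dotE (∑ i, lam i • α i) x = ∑ i, lam i * dotE (α i) x := by
  simp only [dotE_eq_inner, sum_inner, real_inner_smul_left]

lemma mem_polyOf {n m : ℕ} {α : Fin m → Euc n} {b : Fin m → ℝ} {x : Euc n} :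
    x ∈ polyOf α b ↔ ∀ i, dotE (α i) x ≤ b i := Iff.rfl

end DotEAux

/-- Let `α 1, …, α m` be nonzero vectors positively spanning `(ℝⁿ)*` and
`b ∈ ℝ^m`.  Then `b` is the vector of values of the support function of the polytope `P(b)`
at the `α i` (i.e. `P(b)` is nonempty and each `b j` is attained as `⟨α j, x⟩` for some
`x ∈ P(b)`) if and only if: (1) `Σ λ i b i ≥ 0` for every nonnegative dependence
`Σ λ i α i = 0`, and (2) `Σ λ i b i ≥ b j` for every nonnegative combination
`Σ λ i α i = α j`.  Moreover the same holds imposing only the dependences and combinations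
with minimal support. -/
theorem delzant_stmt_13 {n m : ℕ} (α : Fin m → Euc n) (hα : ∀ i, α i ≠ 0)
    (hspan : ∀ y : Euc n, ∃ c : Fin m → ℝ, (∀ i, 0 ≤ c i) ∧ y = ∑ i, c i • α i)
    (b : Fin m → ℝ) :
    (((polyOf α b).Nonempty ∧ ∀ j, ∃ x ∈ polyOf α b, dotE (α j) x = b j) ↔
      ((∀ lam : Fin m → ℝ, (∀ i, 0 ≤ lam i) → (∑ i, lam i • α i) = 0 →
          0 ≤ ∑ i, lam i * b i) ∧
       (∀ lam : Fin m → ℝ, (∀ i, 0 ≤ lam i) → ∀ j, (∑ i, lam i • α i) = α j →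
          b j ≤ ∑ i, lam i * b i))) ∧
    (((polyOf α b).Nonempty ∧ ∀ j, ∃ x ∈ polyOf α b, dotE (α j) x = b j) ↔
      ((∀ lam : Fin m → ℝ, MinimalDep α lam → 0 ≤ ∑ i, lam i * b i) ∧
       (∀ (j : Fin m) (lam : Fin m → ℝ), MinimalComb α j lam →
          b j ≤ ∑ i, lam i * b i))) := by
  classical
  have h1 : ((polyOf α b).Nonempty ∧ ∀ j, ∃ x ∈ polyOf α b, dotE (α j) x = b j) →
      ((∀ lam : Fin m → ℝ, (∀ i, 0 ≤ lam i) → (∑ i, lam i • α i) = 0 →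
          0 ≤ ∑ i, lam i * b i) ∧
       (∀ lam : Fin m → ℝ, (∀ i, 0 ≤ lam i) → ∀ j, (∑ i, lam i • α i) = α j →
          b j ≤ ∑ i, lam i * b i)) := by
    rintro ⟨⟨x0, hx0⟩, hatt⟩
    rw [mem_polyOf] at hx0
    constructor
    · intro lam hl0 hdep
      have hz : (0:ℝ) = ∑ i, lam i * dotE (α i) x0 := by
        rw [← dotE_sum_smul, hdep]
        simp [dotE]
      rw [hz]
      exact Finset.sum_le_sum fun i _ => mul_le_mul_of_nonneg_left (hx0 i) (hl0 i)
    · intro lam hl0 j hcomb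
      obtain ⟨x, hx, hxj⟩ := hatt j
      rw [mem_polyOf] at hx
      have hz : b j = ∑ i, lam i * dotE (α i) x := by
        rw [← dotE_sum_smul, hcomb, hxj]
      rw [hz]
      exact Finset.sum_le_sum fun i _ => mul_le_mul_of_nonneg_left (hx i) (hl0 i)
  have h4 : ((∀ lam : Fin m → ℝ, (∀ i, 0 ≤ lam i) → (∑ i, lam i • α i) = 0 →
          0 ≤ ∑ i, lam i * b i) ∧
       (∀ lam : Fin m → ℝ, (∀ i, 0 ≤ lam i) → ∀ j, (∑ i, lam i • α i) = α j →
          b j ≤ ∑ i, lam i * b i)) →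
      ((polyOf α b).Nonempty ∧ ∀ j, ∃ x ∈ polyOf α b, dotE (α j) x = b j) := by
    rintro ⟨g1, g2⟩
    constructor
    · obtain ⟨x, hx⟩ := FarkasAux.farkas α b g1
      exact ⟨x, mem_polyOf.mpr fun i => by rw [dotE_eq_inner]; exact hx i⟩
    · intro j
      set v : Fin (m+1) → Euc n := Fin.snoc α (-(α j)) with hv
      set cc : Fin (m+1) → ℝ := Fin.snoc b (-(b j)) with hcc
      have hfk : ∀ l : Fin (m+1) → ℝ, (∀ i, 0 ≤ l i) → (∑ i, l i • v i) = 0 →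
          0 ≤ ∑ i, l i * cc i := by
        intro l hl0 hdep
        rw [Fin.sum_univ_castSucc] at hdep
        simp only [hv, Fin.snoc_castSucc, Fin.snoc_last] at hdep
        rw [smul_neg] at hdep
        have hsum : (∑ i : Fin m, l i.castSucc • α i) = l (Fin.last m) • α j :=
          add_neg_eq_zero.mp hdep
        rw [Fin.sum_univ_castSucc]
        simp only [hcc, Fin.snoc_castSucc, Fin.snoc_last]
        rcases eq_or_lt_of_le (hl0 (Fin.last m)) with h | h
        · have hdep' : (∑ i : Fin m, l i.castSucc • α i) = 0 := by
            rw [hsum, ← h, zero_smul]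
          have hg := g1 (fun i => l i.castSucc) (fun i => hl0 _) hdep'
          rw [← h, zero_mul, add_zero]
          exact hg
        · have hcomb : (∑ i : Fin m, (l i.castSucc / l (Fin.last m)) • α i) = α j := by
            have hstep : (∑ i : Fin m, (l i.castSucc / l (Fin.last m)) • α i)
                = (l (Fin.last m))⁻¹ • ∑ i : Fin m, l i.castSucc • α i := by
              rw [Finset.smul_sum]
              exact Finset.sum_congr rfl fun i _ => by
                rw [smul_smul, div_eq_inv_mul]
            rw [hstep, hsum, smul_smul, inv_mul_cancel₀ h.ne', one_smul]
          have hg := g2 (fun i => l i.castSucc / l (Fin.last m))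
            (fun i => div_nonneg (hl0 _) h.le) j hcomb
          have hdiv : (∑ i : Fin m, (l i.castSucc / l (Fin.last m)) * b i)
              = (∑ i : Fin m, l i.castSucc * b i) / l (Fin.last m) := by
            rw [Finset.sum_div]
            exact Finset.sum_congr rfl fun i _ => by ring
          rw [hdiv, le_div_iff₀ h] at hg
          have : l (Fin.last m) * -(b j) = -(b j * l (Fin.last m)) := by ring
          rw [this]
          linarith
      obtain ⟨x, hx⟩ := FarkasAux.farkas v cc hfk
      have hxP : x ∈ polyOf α b := by
        rw [mem_polyOf]
        intro i
        have hxi := hx i.castSucc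
        simp only [hv, hcc, Fin.snoc_castSucc] at hxi
        rw [dotE_eq_inner]
        exact hxi
      have hlast := hx (Fin.last m)
      simp only [hv, hcc, Fin.snoc_last] at hlast
      rw [inner_neg_left] at hlast
      refine ⟨x, hxP, le_antisymm (mem_polyOf.mp hxP j) ?_⟩
      rw [dotE_eq_inner]
      linarith
  have h2 : ((∀ lam : Fin m → ℝ, (∀ i, 0 ≤ lam i) → (∑ i, lam i • α i) = 0 →
          0 ≤ ∑ i, lam i * b i) ∧
       (∀ lam : Fin m → ℝ, (∀ i, 0 ≤ lam i) → ∀ j, (∑ i, lam i • α i) = α j →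
          b j ≤ ∑ i, lam i * b i)) →
      ((∀ lam : Fin m → ℝ, MinimalDep α lam → 0 ≤ ∑ i, lam i * b i) ∧
       (∀ (j : Fin m) (lam : Fin m → ℝ), MinimalComb α j lam →
          b j ≤ ∑ i, lam i * b i)) := by
    rintro ⟨g1, g2⟩
    exact ⟨fun lam hlam => g1 lam hlam.1 hlam.2.1,
      fun j lam hlam => g2 lam hlam.1 j hlam.2.1⟩
  have h3 : ((∀ lam : Fin m → ℝ, MinimalDep α lam → 0 ≤ ∑ i, lam i * b i) ∧
       (∀ (j : Fin m) (lam : Fin m → ℝ), MinimalComb α j lam →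
          b j ≤ ∑ i, lam i * b i)) →
      ((∀ lam : Fin m → ℝ, (∀ i, 0 ≤ lam i) → (∑ i, lam i • α i) = 0 →
          0 ≤ ∑ i, lam i * b i) ∧
       (∀ lam : Fin m → ℝ, (∀ i, 0 ≤ lam i) → ∀ j, (∑ i, lam i • α i) = α j →
          b j ≤ ∑ i, lam i * b i)) := by
    rintro ⟨m1, m2⟩
    have hd : ∀ lam : Fin m → ℝ, (∀ i, 0 ≤ lam i) → (∑ i, lam i • α i) = 0 →
        0 ≤ ∑ i, lam i * b i :=
      fun lam h0 hdep => dep_reduce α b m1 _ lam le_rfl h0 hdep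
    exact ⟨hd, fun lam h0 j hcomb => comb_reduce α b hd m2 _ j lam le_rfl h0 hcomb⟩
  exact ⟨⟨h1, h4⟩, ⟨fun a => h2 (h1 a), fun mn => h4 (h3 mn)⟩⟩
end
end
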